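/- arXiv:1810.05245 — 6 statements merged into one kernel-verified Lean document; each statement's English description precedes it below -/
import Mathlib

section
/- Let p ≥ 1, let X_1, …, X_n be independent nonnegative random variables with E X_j^p < ∞ for all j, and let S = X_1 + … + X_n. Then for every ε > 0, E S^p ≤ ε^p · exp(p · Σ_{j=1}^n ν_{ε,p}(X_j)). -/
open MeasureTheory ProbabilityTheory

lemma sum_le_prod_one_add {ι : Type*} (s : Finset ι) (a : ι → ℝ) (ha : ∀ i ∈ s, 0 ≤ a i) :
    ∑ i ∈ s, a i ≤ ∏ i ∈ s, (1 + a i) := by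
  classical
  induction s using Finset.induction_on with
  | empty => simp
  | insert j s hi ih =>
    rw [Finset.sum_insert hi, Finset.prod_insert hi]
    have h1 : ∀ i ∈ s, 0 ≤ a i := fun i his => ha i (Finset.mem_insert_of_mem his)
    have h2 : (0:ℝ) ≤ ∑ i ∈ s, a i := Finset.sum_nonneg h1
    have h3 := ih h1
    have haj : 0 ≤ a j := ha j (Finset.mem_insert_self _ _)
    have hP1 : (1:ℝ) ≤ ∏ i ∈ s, (1 + a i) := by
      calc (1:ℝ) = ∏ _i ∈ s, (1:ℝ) := by simp
        _ ≤ ∏ i ∈ s, (1 + a i) :=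
          Finset.prod_le_prod (fun i _ => by norm_num) (fun i hi => by linarith [h1 i hi])
    nlinarith

lemma prod_one_add_nonneg {ι : Type*} (s : Finset ι) (a : ι → ℝ) (ha : ∀ i ∈ s, 0 ≤ a i) :
    (0:ℝ) ≤ ∏ i ∈ s, (1 + a i) :=
  Finset.prod_nonneg fun i hi => by linarith [ha i hi]

lemma rpow_one_add_le {x p : ℝ} (hx : 0 ≤ x) (hp : 1 ≤ p) :
    (1 + x) ^ p ≤ 2 ^ p * (1 + x ^ p) := by
  have hp0 : 0 ≤ p := by linarith
  rcases le_total x 1 with h | h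
  · calc (1 + x) ^ p ≤ 2 ^ p := Real.rpow_le_rpow (by linarith) (by linarith) hp0
      _ ≤ 2 ^ p * (1 + x ^ p) := by
          nlinarith [Real.rpow_nonneg hx p, Real.rpow_nonneg (by norm_num : (0:ℝ) ≤ 2) p]
  · calc (1 + x) ^ p ≤ (2 * x) ^ p := Real.rpow_le_rpow (by linarith) (by linarith) hp0
      _ = 2 ^ p * x ^ p := Real.mul_rpow (by norm_num) hx
      _ ≤ 2 ^ p * (1 + x ^ p) := by
          nlinarith [Real.rpow_nonneg hx p, Real.rpow_nonneg (by norm_num : (0:ℝ) ≤ 2) p]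

/-- The L-function of Latała: `ν_{ε,p}(X) = (1/p) · ln E (1 + X/ε)^p`. -/
noncomputable def nu {Ω : Type*} [MeasurableSpace Ω] (μ : Measure Ω) (p ε : ℝ) (X : Ω → ℝ) : ℝ :=
  (1 / p) * Real.log (∫ ω, (1 + X ω / ε) ^ p ∂μ)

theorem stmt_1 {Ω : Type*} [MeasurableSpace Ω] (μ : Measure Ω) [IsProbabilityMeasure μ]
    (p : ℝ) (hp : 1 ≤ p) (n : ℕ) (X : Fin n → Ω → ℝ)
    (hmeas : ∀ j, Measurable (X j)) (hnn : ∀ j ω, 0 ≤ X j ω)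
    (hindep : iIndepFun X μ)
    (hint : ∀ j, Integrable (fun ω => X j ω ^ p) μ)
    (ε : ℝ) (hε : 0 < ε) :
    ∫ ω, (∑ j, X j ω) ^ p ∂μ ≤ ε ^ p * Real.exp (p * ∑ j, nu μ p ε (X j)) := by
  have hp0 : (0:ℝ) < p := by linarith
  set f : Fin n → Ω → ℝ := fun j ω => (1 + X j ω / ε) ^ p with hf
  have hfnn : ∀ j ω, (0:ℝ) ≤ f j ω := fun j ω =>
    Real.rpow_nonneg (by linarith [div_nonneg (hnn j ω) hε.le]) p
  have hf1 : ∀ j ω, (1:ℝ) ≤ f j ω := fun j ω => by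
    have h1 : (1:ℝ) = 1 ^ p := (Real.one_rpow p).symm
    rw [hf]
    rw [h1]
    exact Real.rpow_le_rpow (by norm_num)
      (by nlinarith [div_nonneg (hnn j ω) hε.le]) hp0.le
  have hrpm : Measurable (fun x : ℝ => (1 + x / ε) ^ p) :=
    (Real.continuous_rpow_const hp0.le).measurable.comp
      (measurable_const.add (measurable_id.div_const ε))
  have hfmeas : ∀ j, Measurable (f j) := fun j => hrpm.comp (hmeas j)
  have hfint : ∀ j, Integrable (f j) μ := by
    intro j
    have hxint : Integrable (fun ω => (X j ω / ε) ^ p) μ := by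
      have h := (hint j).const_mul ((ε ^ p)⁻¹)
      refine h.congr (Filter.Eventually.of_forall fun ω => ?_)
      show (ε ^ p)⁻¹ * X j ω ^ p = (X j ω / ε) ^ p
      rw [Real.div_rpow (hnn j ω) hε.le, inv_mul_eq_div]
    have hg : Integrable (fun ω => 2 ^ p * (1 + (X j ω / ε) ^ p)) μ :=
      ((integrable_const (1:ℝ)).add hxint).const_mul _
    refine hg.mono ((hfmeas j).aestronglyMeasurable) (Filter.Eventually.of_forall fun ω => ?_)
    rw [Real.norm_eq_abs, Real.norm_eq_abs, abs_of_nonneg (hfnn j ω),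
      abs_of_nonneg (by
        have := Real.rpow_nonneg (div_nonneg (hnn j ω) hε.le) p
        have h2 := Real.rpow_nonneg (by norm_num : (0:ℝ) ≤ 2) p
        nlinarith)]
    exact rpow_one_add_le (div_nonneg (hnn j ω) hε.le) hp
  have hIpos : ∀ j, (1:ℝ) ≤ ∫ ω, f j ω ∂μ := by
    intro j
    calc (1:ℝ) = ∫ _, (1:ℝ) ∂μ := by simp
      _ ≤ ∫ ω, f j ω ∂μ := integral_mono (integrable_const 1) (hfint j) (fun ω => hf1 j ω)
  have hfind : iIndepFun f μ :=
    hindep.comp (fun _ x => (1 + x / ε) ^ p) (fun _ => hrpm)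
  have hprod : ∀ s : Finset (Fin n),
      Integrable (fun ω => ∏ j ∈ s, f j ω) μ ∧
      ∫ ω, ∏ j ∈ s, f j ω ∂μ = ∏ j ∈ s, ∫ ω, f j ω ∂μ := by
    intro s
    classical
    induction s using Finset.induction_on with
    | empty => simp
    | insert j s hi ih =>
      obtain ⟨ihint, iheq⟩ := ih
      have hIF : IndepFun (f j) (∏ k ∈ s, f k) μ :=
        (hfind.indepFun_finsetProd_of_notMem hfmeas hi).symm
      have hmul : Integrable (f j * ∏ k ∈ s, f k) μ := by
        refine hIF.integrable_mul (hfint j) ?_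
        refine ihint.congr (Filter.Eventually.of_forall fun ω => ?_)
        simp [Finset.prod_apply]
      have heq := hIF.integral_mul_eq_mul_integral
        (hfmeas j).aestronglyMeasurable
        (by
          have hm : Measurable (∏ k ∈ s, f k) := by
            rw [Finset.prod_fn]
            exact Finset.measurable_prod s (fun k _ => hfmeas k)
          exact hm.aestronglyMeasurable)
      constructor
      · refine hmul.congr (Filter.Eventually.of_forall fun ω => ?_)
        show (f j * ∏ k ∈ s, f k) ω = ∏ k ∈ insert j s, f k ω
        rw [Finset.prod_insert hi, Pi.mul_apply, Finset.prod_apply]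
      · rw [Finset.prod_insert hi]
        have hfun : (fun ω => ∏ k ∈ Insert.insert j s, f k ω)
            = (f j * ∏ k ∈ s, f k) := by
          funext ω; simp [Finset.prod_insert hi, Finset.prod_apply, Pi.mul_apply]
        rw [hfun, heq, ← iheq]
        rw [Finset.prod_fn]
  have hrhs : Real.exp (p * ∑ j, nu μ p ε (X j)) = ∏ j, ∫ ω, f j ω ∂μ := by
    unfold nu
    rw [Finset.mul_sum]
    have hlog : ∀ j : Fin n, p * (1 / p * Real.log (∫ ω, (1 + X j ω / ε) ^ p ∂μ))
        = Real.log (∫ ω, f j ω ∂μ) := by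
      intro j; rw [hf]; field_simp
    simp_rw [hlog]
    rw [Real.exp_sum]
    exact Finset.prod_congr rfl fun j _ => Real.exp_log (lt_of_lt_of_le one_pos (hIpos j))
  rw [hrhs]
  have hpt : ∀ ω, (∑ j, X j ω) ^ p ≤ ε ^ p * ∏ j, f j ω := by
    intro ω
    have hsum : ∑ j, X j ω ≤ ε * ∏ j, (1 + X j ω / ε) := by
      have h := sum_le_prod_one_add Finset.univ (fun j => X j ω / ε)
        (fun j _ => div_nonneg (hnn j ω) hε.le)
      calc ∑ j, X j ω = ε * ∑ j, X j ω / ε := by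
            rw [Finset.mul_sum]; exact Finset.sum_congr rfl fun j _ => (mul_div_cancel₀ _ hε.ne').symm
        _ ≤ ε * ∏ j, (1 + X j ω / ε) := mul_le_mul_of_nonneg_left h hε.le
    have hsnn : (0:ℝ) ≤ ∑ j, X j ω := Finset.sum_nonneg fun j _ => hnn j ω
    calc (∑ j, X j ω) ^ p ≤ (ε * ∏ j, (1 + X j ω / ε)) ^ p :=
          Real.rpow_le_rpow hsnn hsum hp0.le
      _ = ε ^ p * (∏ j, (1 + X j ω / ε)) ^ p :=
          Real.mul_rpow hε.le (prod_one_add_nonneg _ _ fun j _ => div_nonneg (hnn j ω) hε.le)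
      _ = ε ^ p * ∏ j, f j ω := by
          rw [← Real.finset_prod_rpow _ _ (fun j _ => by linarith [div_nonneg (hnn j ω) hε.le]) p]
  have hintP : Integrable (fun ω => ε ^ p * ∏ j, f j ω) μ := ((hprod Finset.univ).1).const_mul _
  calc ∫ ω, (∑ j, X j ω) ^ p ∂μ ≤ ∫ ω, ε ^ p * ∏ j, f j ω ∂μ :=
        integral_mono_of_nonneg (Filter.Eventually.of_forall fun ω =>
          Real.rpow_nonneg (Finset.sum_nonneg fun j _ => hnn j ω) p)
          hintP (Filter.Eventually.of_forall hpt)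
    _ = ε ^ p * ∫ ω, ∏ j, f j ω ∂μ := integral_const_mul _ _
    _ = ε ^ p * ∏ j, ∫ ω, f j ω ∂μ := by rw [(hprod Finset.univ).2]
end

section
/- Let p ≥ 1, let X_1, …, X_n be independent nonnegative random variables with E X_j^p < ∞ for all j, and let S = X_1 + … + X_n. If ε > 0 satisfies Σ_{j=1}^n ν_{ε,p}(X_j) ≥ 1, then E S^p ≥ (ε/10)^p. -/
open MeasureTheory ProbabilityTheory

section scalar

/-- chord bound for `exp` on `[0, c]`. -/
lemma exp_le_chord {x c : ℝ} (hx : 0 ≤ x) (hxc : x ≤ c) (hc : 0 < c) :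
    Real.exp x ≤ 1 + (Real.exp c - 1) * (x / c) := by
  have ha : 0 ≤ 1 - x/c := by
    rw [sub_nonneg]; exact div_le_one_of_le₀ hxc hc.le
  have hb : 0 ≤ x/c := div_nonneg hx hc.le
  have hab : (1 - x/c) + x/c = 1 := by ring
  have h := convexOn_exp.2 (Set.mem_univ (0:ℝ)) (Set.mem_univ c) ha hb hab
  simp only [smul_eq_mul, mul_zero, zero_add, Real.exp_zero, mul_one] at h
  have hxx : x / c * c = x := div_mul_cancel₀ x hc.ne'
  rw [hxx] at h
  nlinarith [h]

/-- convexity: `x^p` lies above its tangent at `θ`. -/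
lemma tangent_rpow {θ x p : ℝ} (hθ : 0 < θ) (hx : 0 ≤ x) (hp : 1 ≤ p) :
    θ ^ p + p * θ ^ (p - 1) * (x - θ) ≤ x ^ p := by
  have hu : (-1 : ℝ) ≤ x / θ - 1 := by
    have : 0 ≤ x / θ := div_nonneg hx hθ.le
    linarith
  have hb := one_add_mul_self_le_rpow_one_add hu hp
  have h1 : (1 : ℝ) + (x / θ - 1) = x / θ := by ring
  rw [h1] at hb
  have hθp : (0:ℝ) < θ ^ p := Real.rpow_pos_of_pos hθ p
  have hmul := mul_le_mul_of_nonneg_left hb hθp.le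
  have hxp : θ ^ p * (x / θ) ^ p = x ^ p := by
    rw [Real.div_rpow hx hθ.le]
    field_simp
  rw [hxp] at hmul
  have hθ1 : θ ^ (p - 1) = θ ^ p / θ := by
    rw [Real.rpow_sub hθ, Real.rpow_one]
  calc θ ^ p + p * θ ^ (p - 1) * (x - θ)
      = θ ^ p * (1 + p * (x / θ - 1)) := by rw [hθ1]; field_simp
    _ ≤ x ^ p := hmul

lemma add_rpow_le_rpow_add' {a b p : ℝ} (ha : 0 ≤ a) (hb : 0 ≤ b) (hp : 1 ≤ p) :
    a ^ p + b ^ p ≤ (a + b) ^ p := by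
  have h := NNReal.add_rpow_le_rpow_add (Real.toNNReal a) (Real.toNNReal b) hp
  have h2 := NNReal.coe_le_coe.2 h
  simpa [NNReal.coe_rpow, Real.coe_toNNReal a ha, Real.coe_toNNReal b hb,
    Real.toNNReal_add ha hb] using h2

lemma rpow_add_le_two_rpow {a b p : ℝ} (ha : 0 ≤ a) (hb : 0 ≤ b) (hp : 0 ≤ p) :
    (a + b) ^ p ≤ 2 ^ p * (a ^ p + b ^ p) := by
  have h1 : a + b ≤ 2 * max a b := by
    rcases max_cases a b with ⟨h, h'⟩ | ⟨h, h'⟩ <;> rw [h] <;> linarith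
  have h2 : (a + b) ^ p ≤ (2 * max a b) ^ p :=
    Real.rpow_le_rpow (by linarith) h1 hp
  have h3 : (2 * max a b) ^ p = 2 ^ p * (max a b) ^ p :=
    Real.mul_rpow (by norm_num) (le_max_of_le_left ha)
  have h4 : (max a b) ^ p ≤ a ^ p + b ^ p := by
    rcases max_cases a b with ⟨h, _⟩ | ⟨h, _⟩ <;> rw [h]
    · nlinarith [Real.rpow_nonneg hb p]
    · nlinarith [Real.rpow_nonneg ha p]
  calc (a + b) ^ p ≤ 2 ^ p * (max a b) ^ p := by rw [← h3]; exact h2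
    _ ≤ 2 ^ p * (a ^ p + b ^ p) := by
        have : (0:ℝ) ≤ 2 ^ p := Real.rpow_nonneg (by norm_num) p
        nlinarith

lemma sum_rpow_le_rpow_sum {ι : Type*} (s : Finset ι) (f : ι → ℝ) {p : ℝ}
    (hf : ∀ i ∈ s, 0 ≤ f i) (hp : 1 ≤ p) :
    ∑ i ∈ s, f i ^ p ≤ (∑ i ∈ s, f i) ^ p := by
  classical
  induction s using Finset.induction_on with
  | empty => simp [Real.zero_rpow (by linarith : p ≠ 0)]
  | @insert j s' hj ih =>
    have hfs : ∀ i ∈ s', 0 ≤ f i := fun i hi => hf i (Finset.mem_insert_of_mem hi)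
    have hsum : 0 ≤ ∑ i ∈ s', f i := Finset.sum_nonneg hfs
    have hfj : 0 ≤ f j := hf j (Finset.mem_insert_self _ _)
    rw [Finset.sum_insert hj, Finset.sum_insert hj]
    calc f j ^ p + ∑ i ∈ s', f i ^ p ≤ f j ^ p + (∑ i ∈ s', f i) ^ p := by
          linarith [ih hfs]
      _ ≤ (f j + ∑ i ∈ s', f i) ^ p := add_rpow_le_rpow_add' hfj hsum hp

end scalar



lemma measurable_rpow_const' {Ω : Type*} [MeasurableSpace Ω] {f : Ω → ℝ} (hf : Measurable f)
    {q : ℝ} (hq : 0 ≤ q) : Measurable fun ω => f ω ^ q :=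
  (Real.continuous_rpow_const hq).measurable.comp hf

section meas
variable {Ω : Type*} [MeasurableSpace Ω] {μ : Measure Ω} [IsProbabilityMeasure μ]

lemma integrable_of_bounded' {f : Ω → ℝ} (hm : Measurable f) (C : ℝ)
    (h : ∀ ω, |f ω| ≤ C) : Integrable f μ :=
  (integrable_const C).mono' hm.aestronglyMeasurable (Filter.Eventually.of_forall h)

/-- integrability of `(∑ f i)^p` given integrability of each `(f i)^p`. -/
lemma integrable_rpow_sum {ι : Type*} (s : Finset ι) (f : ι → Ω → ℝ) {p : ℝ}
    (hm : ∀ i, Measurable (f i)) (hnn : ∀ i ω, 0 ≤ f i ω)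
    (hint : ∀ i, Integrable (fun ω => f i ω ^ p) μ) (hp : 1 ≤ p) :
    Integrable (fun ω => (∑ i ∈ s, f i ω) ^ p) μ := by
  classical
  induction s using Finset.induction_on with
  | empty =>
    simp only [Finset.sum_empty]
    simpa [Real.zero_rpow (by linarith : p ≠ 0)] using (integrable_const (0:ℝ) (μ := μ))
  | @insert j s' hj ih =>
    have hmeas : Measurable fun ω => (∑ i ∈ insert j s', f i ω) ^ p :=
      measurable_rpow_const' (Finset.measurable_sum _ fun i _ => hm i) (by linarith)
    have hdom : Integrable (fun ω => 2 ^ p * (f j ω ^ p + (∑ i ∈ s', f i ω) ^ p)) μ :=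
      (Integrable.add (hint j) ih).const_mul _
    refine hdom.mono' hmeas.aestronglyMeasurable (Filter.Eventually.of_forall fun ω => ?_)
    have hsum : 0 ≤ ∑ i ∈ s', f i ω := Finset.sum_nonneg fun i _ => hnn i ω
    have h0 : 0 ≤ (∑ i ∈ insert j s', f i ω) ^ p :=
      Real.rpow_nonneg (Finset.sum_nonneg fun i _ => hnn i ω) p
    rw [Real.norm_of_nonneg h0, Finset.sum_insert hj]
    exact rpow_add_le_two_rpow (hnn j ω) hsum (by linarith)

/-- pointwise bound for finset products with values in `[lo, hi]`. -/
lemma prod_mem_Icc {n : ℕ} (V : Fin n → Ω → ℝ) {hi : ℝ} (h1 : 1 ≤ hi)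
    (hb : ∀ i ω, V i ω ∈ Set.Icc 1 hi) (s : Finset (Fin n)) (ω : Ω) :
    (∏ i ∈ s, V i ω) ∈ Set.Icc 1 (hi ^ s.card) := by
  constructor
  · calc (1:ℝ) = ∏ _i ∈ s, 1 := by rw [Finset.prod_const_one]
      _ ≤ ∏ i ∈ s, V i ω :=
        Finset.prod_le_prod (fun i _ => zero_le_one) (fun i _ => (hb i ω).1)
  · calc (∏ i ∈ s, V i ω) ≤ ∏ _i ∈ s, hi :=
        Finset.prod_le_prod (fun i _ => by linarith [(hb i ω).1]) (fun i _ => (hb i ω).2)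
    _ = hi ^ s.card := by rw [Finset.prod_const]

/-- Expectation of product of independent bounded random variables. -/
lemma integral_prod_of_indep {n : ℕ} (V : Fin n → Ω → ℝ)
    (hind : iIndepFun V μ) (hm : ∀ i, Measurable (V i))
    {hi : ℝ} (h1 : 1 ≤ hi) (hb : ∀ i ω, V i ω ∈ Set.Icc 1 hi) (s : Finset (Fin n)) :
    ∫ ω, ∏ i ∈ s, V i ω ∂μ = ∏ i ∈ s, ∫ ω, V i ω ∂μ := by
  classical
  induction s using Finset.induction_on with
  | empty => simp
  | @insert j s' hj ih =>
    have hip : IndepFun (∏ i ∈ s', V i) (V j) μ :=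
      hind.indepFun_finsetProd_of_notMem hm hj
    have hprodm : Measurable (∏ i ∈ s', V i) := by
      have : (∏ i ∈ s', V i) = fun ω => ∏ i ∈ s', V i ω := by
        funext ω; simp [Finset.prod_apply]
      rw [this]; exact Finset.measurable_prod _ fun i _ => hm i
    have hint1 : Integrable (∏ i ∈ s', V i) μ := by
      refine integrable_of_bounded' hprodm (hi ^ s'.card) fun ω => ?_
      have := prod_mem_Icc V h1 hb s' ω
      rw [abs_le]; constructor
      · simp only [Finset.prod_apply]; nlinarith [this.1, this.2]
      · simpa [Finset.prod_apply] using this.2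
    have hint2 : Integrable (V j) μ := integrable_of_bounded' (hm j) hi fun ω => by
      rw [abs_le]; constructor
      · nlinarith [(hb j ω).1]
      · exact (hb j ω).2
    have := hip.integral_mul_eq_mul_integral hint1.aestronglyMeasurable hint2.aestronglyMeasurable
    simp only [Finset.prod_insert hj]
    rw [← ih]
    calc ∫ ω, V j ω * ∏ i ∈ s', V i ω ∂μ
        = ∫ ω, ((∏ i ∈ s', V i) * V j) ω ∂μ := by
          congr 1; funext ω; simp [Finset.prod_apply]; ring
      _ = (∫ ω, (∏ i ∈ s', V i) ω ∂μ) * ∫ ω, V j ω ∂μ := this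
      _ = (∫ ω, V j ω ∂μ) * ∫ ω, ∏ i ∈ s', V i ω ∂μ := by
          simp only [Finset.prod_apply]; ring

end meas

section stopping
variable {Ω : Type*} [MeasurableSpace Ω] {μ : Measure Ω} [IsProbabilityMeasure μ]

lemma stopping_bound {n : ℕ} (V : Fin n → Ω → ℝ)
    (hind : iIndepFun V μ) (hm : ∀ i, Measurable (V i))
    (hb : ∀ i ω, V i ω ∈ Set.Icc 1 (5/4 : ℝ)) {p K : ℝ} (hp : 1 ≤ p) (hK : 1 ≤ K)
    (s : Finset (Fin n)) :
    ∫ ω, Set.indicator {ω' | K < ∏ i ∈ s, V i ω'} (fun ω' => (∏ i ∈ s, V i ω') ^ p) ω ∂μ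
      ≤ (5/4*K)^p * (μ {ω' | K < ∏ i ∈ s, V i ω'}).toReal * ∏ i ∈ s, ∫ ω, (V i ω)^p ∂μ := by
  classical
  have hp0 : (0:ℝ) ≤ p := by linarith
  have hZm : ∀ t : Finset (Fin n), Measurable (fun ω => ∏ i ∈ t, V i ω) :=
    fun t => Finset.measurable_prod _ fun i _ => hm i
  have hZb : ∀ (t : Finset (Fin n)) ω, (∏ i ∈ t, V i ω) ∈ Set.Icc 1 ((5/4:ℝ) ^ t.card) :=
    fun t ω => prod_mem_Icc V (by norm_num) hb t ω
  have hφint : ∀ i : Fin n, Integrable (fun ω => V i ω ^ p) μ := by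
    intro i
    refine integrable_of_bounded' (measurable_rpow_const' (hm i) hp0) ((5/4:ℝ)^p) fun ω => ?_
    rw [abs_of_nonneg (Real.rpow_nonneg (by linarith [(hb i ω).1]) p)]
    exact Real.rpow_le_rpow (by linarith [(hb i ω).1]) (hb i ω).2 hp0
  have hφ1 : ∀ i : Fin n, 1 ≤ ∫ ω, V i ω ^ p ∂μ := by
    intro i
    have h1 : (1:ℝ) = ∫ _ω, (1:ℝ) ∂μ := by simp
    rw [h1]
    refine integral_mono (integrable_const 1) (hφint i) fun ω => ?_
    calc (1:ℝ) = 1 ^ p := (Real.one_rpow p).symm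
      _ ≤ V i ω ^ p := Real.rpow_le_rpow zero_le_one (hb i ω).1 hp0
  have hφprod1 : ∀ t : Finset (Fin n), 1 ≤ ∏ i ∈ t, ∫ ω, V i ω ^ p ∂μ := by
    intro t
    calc (1:ℝ) = ∏ _i ∈ t, 1 := by rw [Finset.prod_const_one]
      _ ≤ _ := Finset.prod_le_prod (fun i _ => zero_le_one) (fun i _ => hφ1 i)
  induction s using Finset.induction_on with
  | empty =>
    have hset : {ω' : Ω | K < ∏ i ∈ (∅ : Finset (Fin n)), V i ω'} = ∅ := by
      ext ω; simp only [Finset.prod_empty, Set.mem_setOf_eq, Set.mem_empty_iff_false, iff_false]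
      linarith
    rw [hset]
    simp only [Set.indicator_empty, integral_zero, Finset.prod_empty]
    have : (0:ℝ) ≤ (5/4*K)^p * (μ (∅ : Set Ω)).toReal * 1 := by positivity
    linarith
  | @insert j s' hj ih =>
    simp only [Finset.prod_insert hj]
    set Zs : Ω → ℝ := fun ω => ∏ i ∈ s', V i ω with hZs
    set Z' : Ω → ℝ := fun ω => V j ω * Zs ω with hZ'
    set D : ℝ := 5/4*K with hD
    have hD0 : (0:ℝ) < D := by rw [hD]; linarith
    set φ : Fin n → ℝ := fun i => ∫ ω, V i ω ^ p ∂μ with hφ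
    have hZsm : Measurable Zs := hZm s'
    have hZ'm : Measurable Z' := (hm j).mul hZsm
    have hZs1 : ∀ ω, 1 ≤ Zs ω := fun ω => (hZb s' ω).1
    have hZsC : ∀ ω, Zs ω ≤ (5/4:ℝ)^s'.card := fun ω => (hZb s' ω).2
    have hZ'1 : ∀ ω, 1 ≤ Z' ω := by
      intro ω; simp only [hZ']
      nlinarith [(hb j ω).1, hZs1 ω]
    have hZ'C : ∀ ω, Z' ω ≤ (5/4:ℝ)^(s'.card+1) := by
      intro ω; simp only [hZ']
      rw [pow_succ]
      nlinarith [(hb j ω).1, (hb j ω).2, hZs1 ω, hZsC ω]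
    have hZsZ' : ∀ ω, Zs ω ≤ Z' ω := by
      intro ω; simp only [hZ']
      nlinarith [(hb j ω).1, hZs1 ω]
    set S1 : Set Ω := {ω | K < Zs ω} with hS1
    set S2 : Set Ω := {ω | K < Z' ω ∧ Zs ω ≤ K} with hS2
    have hS1m : MeasurableSet S1 := measurableSet_lt measurable_const hZsm
    have hS2m : MeasurableSet S2 :=
      (measurableSet_lt measurable_const hZ'm).inter (measurableSet_le hZsm measurable_const)
    have hunion : {ω | K < Z' ω} = S1 ∪ S2 := by
      ext ω
      simp only [Set.mem_setOf_eq, Set.mem_union, hS1, hS2]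
      constructor
      · intro h
        rcases le_or_gt (Zs ω) K with h' | h'
        · exact Or.inr ⟨h, h'⟩
        · exact Or.inl h'
      · rintro (h | ⟨h, _⟩)
        · exact lt_of_lt_of_le h (hZsZ' ω)
        · exact h
    have hdisj : Disjoint S1 S2 := by
      rw [Set.disjoint_iff]
      rintro ω ⟨h1, _, h3⟩
      exact absurd h1 (not_lt.2 h3)
    -- split the indicator
    have hindsplit : (fun ω => Set.indicator {ω' | K < Z' ω'} (fun ω' => Z' ω' ^ p) ω)
        = (fun ω => Set.indicator S1 (fun ω' => Z' ω' ^ p) ω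
            + Set.indicator S2 (fun ω' => Z' ω' ^ p) ω) := by
      funext ω
      rw [hunion, Set.indicator_union_of_disjoint hdisj]
    -- integrability of the pieces
    have hbound : ∀ ω, Z' ω ^ p ≤ ((5/4:ℝ)^(s'.card+1)) ^ p := fun ω =>
      Real.rpow_le_rpow (by linarith [hZ'1 ω]) (hZ'C ω) hp0
    have hint_ind : ∀ (S : Set Ω), MeasurableSet S →
        Integrable (fun ω => Set.indicator S (fun ω' => Z' ω' ^ p) ω) μ := by
      intro S hSm
      have hb0 : (0:ℝ) ≤ ((5/4:ℝ)^(s'.card+1)) ^ p := Real.rpow_nonneg (by positivity) p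
      refine integrable_of_bounded' ((measurable_rpow_const' hZ'm hp0).indicator hSm)
        (((5/4:ℝ)^(s'.card+1)) ^ p) fun ω => ?_
      rw [abs_le]
      constructor
      · have h0 := Set.indicator_nonneg (s := S) (fun ω' _ => Real.rpow_nonneg (by linarith [hZ'1 ω'] : (0:ℝ) ≤ Z' ω') p) ω
        linarith
      · exact Set.indicator_le' (fun ω' _ => hbound ω') (fun ω' _ => hb0) ω
    -- first piece: independence
    have hip0 : IndepFun (∏ i ∈ s', V i) (V j) μ :=
      hind.indepFun_finsetProd_of_notMem hm hj
    set F : ℝ → ℝ := fun x => Set.indicator (Set.Ioi K) (fun y => y ^ p) x with hF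
    have hFm : Measurable F :=
      (measurable_rpow_const' measurable_id hp0).indicator measurableSet_Ioi
    have hGm : Measurable (fun x : ℝ => x ^ p) := measurable_rpow_const' measurable_id hp0
    have hip : IndepFun (F ∘ (∏ i ∈ s', V i)) ((fun x : ℝ => x ^ p) ∘ V j) μ :=
      hip0.comp hFm hGm
    have hFZ : (F ∘ (∏ i ∈ s', V i)) = fun ω => Set.indicator S1 (fun ω' => Zs ω' ^ p) ω := by
      funext ω
      simp only [Function.comp_apply, Finset.prod_apply, hF, Set.indicator, Set.mem_Ioi,
        Set.mem_setOf_eq, hS1, hZs]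
    have hint_indZs : Integrable (fun ω => Set.indicator S1 (fun ω' => Zs ω' ^ p) ω) μ := by
      have hb0 : (0:ℝ) ≤ ((5/4:ℝ)^s'.card) ^ p := Real.rpow_nonneg (by positivity) p
      refine integrable_of_bounded' ((measurable_rpow_const' hZsm hp0).indicator hS1m)
        (((5/4:ℝ)^s'.card) ^ p) fun ω => ?_
      rw [abs_le]
      constructor
      · have h0 := Set.indicator_nonneg (s := S1) (fun ω' _ => Real.rpow_nonneg (by linarith [hZs1 ω'] : (0:ℝ) ≤ Zs ω') p) ω
        linarith
      · exact Set.indicator_le' (fun ω' _ => Real.rpow_le_rpow (by linarith [hZs1 ω']) (hZsC ω') hp0) (fun ω' _ => hb0) ω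
    have hmulid : (fun ω => Set.indicator S1 (fun ω' => Z' ω' ^ p) ω)
        = fun ω => (F ∘ (∏ i ∈ s', V i)) ω * ((fun x : ℝ => x ^ p) ∘ V j) ω := by
      funext ω
      rw [hFZ]
      simp only [Function.comp_apply]
      by_cases hω : ω ∈ S1
      · rw [Set.indicator_of_mem hω, Set.indicator_of_mem hω]
        simp only [hZ']
        rw [Real.mul_rpow (by linarith [(hb j ω).1]) (by linarith [hZs1 ω])]
        ring
      · rw [Set.indicator_of_notMem hω, Set.indicator_of_notMem hω, zero_mul]
    have hint_Vjp : Integrable (fun ω => V j ω ^ p) μ := hφint j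
    have hfirst : ∫ ω, Set.indicator S1 (fun ω' => Z' ω' ^ p) ω ∂μ
        = (∫ ω, Set.indicator S1 (fun ω' => Zs ω' ^ p) ω ∂μ) * φ j := by
      rw [hmulid]
      have := hip.integral_mul_eq_mul_integral (by rw [hFZ]; exact hint_indZs.aestronglyMeasurable) hint_Vjp.aestronglyMeasurable
      calc ∫ ω, (F ∘ (∏ i ∈ s', V i)) ω * ((fun x : ℝ => x ^ p) ∘ V j) ω ∂μ
          = ∫ ω, ((F ∘ (∏ i ∈ s', V i)) * ((fun x : ℝ => x ^ p) ∘ V j)) ω ∂μ := rfl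
        _ = (∫ ω, (F ∘ (∏ i ∈ s', V i)) ω ∂μ) * ∫ ω, ((fun x : ℝ => x ^ p) ∘ V j) ω ∂μ := this
        _ = (∫ ω, Set.indicator S1 (fun ω' => Zs ω' ^ p) ω ∂μ) * φ j := by rw [hFZ]; rfl
    -- second piece
    have hsecond : ∫ ω, Set.indicator S2 (fun ω' => Z' ω' ^ p) ω ∂μ
        ≤ D ^ p * (μ S2).toReal := by
      have hptw : ∀ ω, Set.indicator S2 (fun ω' => Z' ω' ^ p) ω
          ≤ Set.indicator S2 (fun _ => D ^ p) ω := by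
        intro ω
        by_cases hω : ω ∈ S2
        · rw [Set.indicator_of_mem hω, Set.indicator_of_mem hω]
          have hZ'D : Z' ω ≤ D := by
            simp only [hZ', hD]
            rcases hω with ⟨_, h2⟩
            nlinarith [(hb j ω).1, (hb j ω).2, hZs1 ω]
          exact Real.rpow_le_rpow (by linarith [hZ'1 ω]) hZ'D hp0
        · rw [Set.indicator_of_notMem hω, Set.indicator_of_notMem hω]
      calc ∫ ω, Set.indicator S2 (fun ω' => Z' ω' ^ p) ω ∂μ
          ≤ ∫ ω, Set.indicator S2 (fun _ => D ^ p) ω ∂μ := by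
            refine integral_mono (hint_ind S2 hS2m) ?_ hptw
            exact (integrable_const _).indicator hS2m
        _ = (μ S2).toReal • (D ^ p) := integral_indicator_const _ hS2m
        _ = D ^ p * (μ S2).toReal := by rw [smul_eq_mul]; ring
    -- assemble
    show ∫ ω, Set.indicator {ω' | K < Z' ω'} (fun ω' => Z' ω' ^ p) ω ∂μ
      ≤ D ^ p * (μ {ω' | K < Z' ω'}).toReal * (φ j * ∏ i ∈ s', φ i)
    rw [hindsplit]
    rw [integral_add (hint_ind S1 hS1m) (hint_ind S2 hS2m)]
    have hIH := ih
    have hμadd : (μ {ω | K < Z' ω}).toReal = (μ S1).toReal + (μ S2).toReal := by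
      rw [hunion, measure_union hdisj hS2m, ENNReal.toReal_add (measure_ne_top μ _) (measure_ne_top μ _)]
    have hφj_nonneg : (0:ℝ) ≤ φ j := by linarith [hφ1 j]
    have h1 : ∫ ω, Set.indicator S1 (fun ω' => Z' ω' ^ p) ω ∂μ
        ≤ D ^ p * (μ S1).toReal * (∏ i ∈ s', φ i) * φ j := by
      rw [hfirst]
      exact mul_le_mul_of_nonneg_right hIH hφj_nonneg
    have hfφ : (1:ℝ) ≤ φ j * ∏ i ∈ s', φ i := by
      nlinarith [hφ1 j, hφprod1 s']
    have h2 : ∫ ω, Set.indicator S2 (fun ω' => Z' ω' ^ p) ω ∂μ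
        ≤ D ^ p * (μ S2).toReal * (φ j * ∏ i ∈ s', φ i) := by
      calc ∫ ω, Set.indicator S2 (fun ω' => Z' ω' ^ p) ω ∂μ ≤ D ^ p * (μ S2).toReal := hsecond
        _ ≤ D ^ p * (μ S2).toReal * (φ j * ∏ i ∈ s', φ i) := by
            nlinarith [hfφ, mul_nonneg (Real.rpow_nonneg hD0.le p) (ENNReal.toReal_nonneg (a := μ S2))]
    calc ∫ ω, Set.indicator S1 (fun ω' => Z' ω' ^ p) ω ∂μ
          + ∫ ω, Set.indicator S2 (fun ω' => Z' ω' ^ p) ω ∂μ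
        ≤ D ^ p * (μ S1).toReal * (∏ i ∈ s', φ i) * φ j
          + D ^ p * (μ S2).toReal * (φ j * ∏ i ∈ s', φ i) := by linarith
      _ = D ^ p * ((μ S1).toReal + (μ S2).toReal) * (φ j * ∏ i ∈ s', φ i) := by ring
      _ = D ^ p * (μ {ω | K < Z' ω}).toReal * (φ j * ∏ i ∈ s', φ i) := by rw [hμadd]

end stopping

set_option maxHeartbeats 1000000 in
theorem stmt_2 {Ω : Type*} [MeasurableSpace Ω] (μ : Measure Ω) [IsProbabilityMeasure μ]
    (p : ℝ) (hp : 1 ≤ p) (n : ℕ) (X : Fin n → Ω → ℝ)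
    (hmeas : ∀ j, Measurable (X j)) (hnn : ∀ j ω, 0 ≤ X j ω)
    (hindep : iIndepFun X μ)
    (hint : ∀ j, Integrable (fun ω => X j ω ^ p) μ)
    (ε : ℝ) (hε : 0 < ε) (hsum : 1 ≤ ∑ j, nu μ p ε (X j)) :
    (ε / 10) ^ p ≤ ∫ ω, (∑ j, X j ω) ^ p ∂μ := by
  classical
  have hp0 : (0:ℝ) < p := by linarith
  have hp0' : (0:ℝ) ≤ p := hp0.le
  -- normalized variables
  set Y : Fin n → Ω → ℝ := fun j ω => X j ω / ε with hYdef
  have hYm : ∀ j, Measurable (Y j) := fun j => (hmeas j).div_const ε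
  have hYnn : ∀ j ω, 0 ≤ Y j ω := fun j ω => div_nonneg (hnn j ω) hε.le
  have hYint : ∀ j, Integrable (fun ω => Y j ω ^ p) μ := by
    intro j
    have heq : (fun ω => Y j ω ^ p) = fun ω => (ε ^ p)⁻¹ * X j ω ^ p := by
      funext ω
      simp only [hYdef]
      rw [Real.div_rpow (hnn j ω) hε.le]
      ring
    rw [heq]; exact (hint j).const_mul _
  -- small and large parts
  set A : Fin n → Ω → ℝ := fun j ω => if Y j ω ≤ 1/4 then Y j ω else 0 with hAdef
  set B : Fin n → Ω → ℝ := fun j ω => if Y j ω ≤ 1/4 then 0 else Y j ω with hBdef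
  have hAm : ∀ j, Measurable (A j) := fun j =>
    Measurable.ite (measurableSet_le (hYm j) measurable_const) (hYm j) measurable_const
  have hBm : ∀ j, Measurable (B j) := fun j =>
    Measurable.ite (measurableSet_le (hYm j) measurable_const) measurable_const (hYm j)
  have hAnn : ∀ j ω, 0 ≤ A j ω := by
    intro j ω; simp only [hAdef]; split
    · exact hYnn j ω
    · exact le_rfl
  have hAle : ∀ j ω, A j ω ≤ 1/4 := by
    intro j ω; simp only [hAdef]; split
    · assumption
    · norm_num
  have hAleY : ∀ j ω, A j ω ≤ Y j ω := by
    intro j ω; simp only [hAdef]; split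
    · exact le_rfl
    · exact hYnn j ω
  have hBnn : ∀ j ω, 0 ≤ B j ω := by
    intro j ω; simp only [hBdef]; split
    · exact le_rfl
    · exact hYnn j ω
  have hBleY : ∀ j ω, B j ω ≤ Y j ω := by
    intro j ω; simp only [hBdef]; split
    · exact hYnn j ω
    · exact le_rfl
  -- integrability facts
  have hi1Y : ∀ j, Integrable (fun ω => (1 + Y j ω) ^ p) μ := by
    intro j
    have hdom : Integrable (fun ω => 2 ^ p * (1 + Y j ω ^ p)) μ :=
      ((integrable_const (1:ℝ)).add (hYint j)).const_mul _
    refine hdom.mono' (measurable_rpow_const' (measurable_const.add (hYm j)) hp0').aestronglyMeasurable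
      (Filter.Eventually.of_forall fun ω => ?_)
    rw [Real.norm_of_nonneg (Real.rpow_nonneg (by linarith [hYnn j ω]) p)]
    calc (1 + Y j ω) ^ p ≤ 2 ^ p * (1 ^ p + Y j ω ^ p) :=
          rpow_add_le_two_rpow zero_le_one (hYnn j ω) hp0'
      _ = 2 ^ p * (1 + Y j ω ^ p) := by rw [Real.one_rpow]
  have hi1A : ∀ j, Integrable (fun ω => (1 + A j ω) ^ p) μ := by
    intro j
    refine integrable_of_bounded' (measurable_rpow_const' (measurable_const.add (hAm j)) hp0')
      ((5/4 : ℝ) ^ p) fun ω => ?_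
    rw [abs_of_nonneg (Real.rpow_nonneg (by linarith [hAnn j ω]) p)]
    exact Real.rpow_le_rpow (by linarith [hAnn j ω]) (by linarith [hAle j ω]) hp0'
  have hi1B : ∀ j, Integrable (fun ω => (1 + B j ω) ^ p) μ := by
    intro j
    refine (hi1Y j).mono' (measurable_rpow_const' (measurable_const.add (hBm j)) hp0').aestronglyMeasurable
      (Filter.Eventually.of_forall fun ω => ?_)
    rw [Real.norm_of_nonneg (Real.rpow_nonneg (by linarith [hBnn j ω]) p)]
    exact Real.rpow_le_rpow (by linarith [hBnn j ω]) (by linarith [hBleY j ω]) hp0'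
  -- the three log-moment quantities
  set φf : Fin n → ℝ := fun j => ∫ ω, (1 + Y j ω) ^ p ∂μ with hφf
  set af : Fin n → ℝ := fun j => ∫ ω, (1 + A j ω) ^ p ∂μ with haf
  set bf : Fin n → ℝ := fun j => ∫ ω, (1 + B j ω) ^ p ∂μ with hbf
  have hone : ∫ _ω, (1:ℝ) ∂μ = 1 := by simp
  have hφ1 : ∀ j, 1 ≤ φf j := by
    intro j
    have h := integral_mono (μ := μ) (integrable_const 1) (hi1Y j) (fun ω => by
      calc (1:ℝ) = 1 ^ p := (Real.one_rpow p).symm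
        _ ≤ (1 + Y j ω) ^ p := Real.rpow_le_rpow zero_le_one (by linarith [hYnn j ω]) hp0')
    rw [hone] at h
    simpa only [hφf] using h
  have ha1 : ∀ j, 1 ≤ af j := by
    intro j
    have h := integral_mono (μ := μ) (integrable_const 1) (hi1A j) (fun ω => by
      calc (1:ℝ) = 1 ^ p := (Real.one_rpow p).symm
        _ ≤ (1 + A j ω) ^ p := Real.rpow_le_rpow zero_le_one (by linarith [hAnn j ω]) hp0')
    rw [hone] at h
    simpa only [haf] using h
  have hb1 : ∀ j, 1 ≤ bf j := by
    intro j
    have h := integral_mono (μ := μ) (integrable_const 1) (hi1B j) (fun ω => by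
      calc (1:ℝ) = 1 ^ p := (Real.one_rpow p).symm
        _ ≤ (1 + B j ω) ^ p := Real.rpow_le_rpow zero_le_one (by linarith [hBnn j ω]) hp0')
    rw [hone] at h
    simpa only [hbf] using h
  -- the key splitting identity
  have hiden : ∀ j ω, (1 + Y j ω) ^ p = (1 + A j ω) ^ p + (1 + B j ω) ^ p - 1 := by
    intro j ω
    by_cases h : Y j ω ≤ 1/4
    · simp only [hAdef, hBdef, if_pos h, add_zero, Real.one_rpow]
      ring
    · simp only [hAdef, hBdef, if_neg h, add_zero, Real.one_rpow]
      ring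
  have hφab : ∀ j, φf j = af j + bf j - 1 := by
    intro j
    have heq : ∫ ω, (1 + Y j ω) ^ p ∂μ
        = ∫ ω, ((1 + A j ω) ^ p + (1 + B j ω) ^ p - 1) ∂μ := by
      congr 1; funext ω; exact hiden j ω
    have h2 : ∫ ω, ((1 + A j ω) ^ p + (1 + B j ω) ^ p - 1) ∂μ = af j + bf j - 1 := by
      rw [integral_sub (f := fun ω => (1 + A j ω) ^ p + (1 + B j ω) ^ p)
        (g := fun _ => (1:ℝ)) ((hi1A j).add (hi1B j)) (integrable_const 1),
        integral_add (hi1A j) (hi1B j), hone]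
    calc φf j = ∫ ω, (1 + Y j ω) ^ p ∂μ := by simp only [hφf]
      _ = ∫ ω, ((1 + A j ω) ^ p + (1 + B j ω) ^ p - 1) ∂μ := heq
      _ = af j + bf j - 1 := h2
  have hlogsplit : ∀ j, Real.log (φf j) ≤ Real.log (af j) + Real.log (bf j) := by
    intro j
    have hφle : φf j ≤ af j * bf j := by
      have h1 := ha1 j; have h2 := hb1 j
      rw [hφab j]; nlinarith
    calc Real.log (φf j) ≤ Real.log (af j * bf j) :=
          Real.log_le_log (by linarith [hφ1 j]) hφle
      _ = Real.log (af j) + Real.log (bf j) :=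
          Real.log_mul (by linarith [ha1 j]) (by linarith [hb1 j])
  -- hypothesis transformed
  have hsum2 : p ≤ ∑ j, Real.log (φf j) := by
    have hnu : ∀ j, nu μ p ε (X j) = (1/p) * Real.log (φf j) := fun j => rfl
    simp only [hnu] at hsum
    rw [← Finset.mul_sum] at hsum
    have := mul_le_mul_of_nonneg_left hsum hp0'
    rw [mul_one, ← mul_assoc] at this
    rw [mul_one_div, div_self hp0.ne', one_mul] at this
    exact this
  have hsplit2 : p ≤ (∑ j, Real.log (af j)) + ∑ j, Real.log (bf j) := by
    calc p ≤ ∑ j, Real.log (φf j) := hsum2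
      _ ≤ ∑ j, (Real.log (af j) + Real.log (bf j)) :=
          Finset.sum_le_sum fun j _ => hlogsplit j
      _ = _ := Finset.sum_add_distrib
  -- sums and integrability of S'
  set S' : Ω → ℝ := fun ω => ∑ j, Y j ω with hS'
  have hS'nn : ∀ ω, 0 ≤ S' ω := fun ω => Finset.sum_nonneg fun j _ => hYnn j ω
  have hiS'p : Integrable (fun ω => S' ω ^ p) μ :=
    integrable_rpow_sum Finset.univ Y hYm hYnn hYint hp
  -- REDUCTION to the normalized goal
  suffices hKEY : (1/10 : ℝ)^p ≤ ∫ ω, S' ω ^ p ∂μ by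
    have hXsum : ∀ ω, (∑ j, X j ω) ^ p = ε ^ p * S' ω ^ p := by
      intro ω
      have h1 : ∑ j, X j ω = ε * S' ω := by
        rw [hS', Finset.mul_sum]
        congr 1; funext j
        simp only [hYdef]
        field_simp
      rw [h1, Real.mul_rpow hε.le (hS'nn ω)]
    calc (ε/10)^p = ε ^ p * (1/10)^p := by
          rw [show (ε/10) = ε * (1/10) by ring, Real.mul_rpow hε.le (by norm_num)]
      _ ≤ ε ^ p * ∫ ω, S' ω ^ p ∂μ := by
          have hεp : (0:ℝ) ≤ ε ^ p := Real.rpow_nonneg hε.le p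
          nlinarith
      _ = ∫ ω, ε ^ p * S' ω ^ p ∂μ := (integral_const_mul _ _).symm
      _ = ∫ ω, (∑ j, X j ω) ^ p ∂μ := by
          congr 1; funext ω; rw [hXsum ω]
  -- main case distinction
  rcases le_or_gt (p/2) (∑ j, Real.log (bf j)) with hcaseB | hcaseB'
  · -- CASE B : big jumps dominate
    have hblog : ∀ j, Real.log (bf j) ≤ bf j - 1 :=
      fun j => Real.log_le_sub_one_of_pos (by linarith [hb1 j])
    have hbint : ∀ j, bf j - 1 ≤ 5 ^ p * ∫ ω, Y j ω ^ p ∂μ := by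
      intro j
      have hpt : ∀ ω, (1 + B j ω) ^ p - 1 ≤ 5 ^ p * Y j ω ^ p := by
        intro ω
        have h5Y : (0:ℝ) ≤ 5 ^ p * Y j ω ^ p :=
          mul_nonneg (Real.rpow_nonneg (by norm_num) p) (Real.rpow_nonneg (hYnn j ω) p)
        by_cases h : Y j ω ≤ 1/4
        · simp only [hBdef, if_pos h, add_zero, Real.one_rpow]
          linarith
        · push_neg at h
          simp only [hBdef, if_neg (not_le.2 h), add_zero]
          have h1 : 1 + Y j ω ≤ 5 * Y j ω := by linarith
          calc (1 + Y j ω) ^ p - 1 ≤ (5 * Y j ω) ^ p - 1 := by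
                have := Real.rpow_le_rpow (by linarith [hYnn j ω]) h1 hp0'
                linarith
            _ ≤ 5 ^ p * Y j ω ^ p := by
                rw [Real.mul_rpow (by norm_num) (hYnn j ω)]
                linarith [Real.rpow_nonneg (mul_nonneg (by norm_num : (0:ℝ) ≤ 5) (hYnn j ω)) p]
      have h1 : bf j - 1 = ∫ ω, ((1 + B j ω) ^ p - 1) ∂μ := by
        rw [integral_sub (hi1B j) (integrable_const 1), hone]
      rw [h1, ← integral_const_mul]
      exact integral_mono ((hi1B j).sub (integrable_const 1)) ((hYint j).const_mul _) hpt
    have hsumY : ∑ j, ∫ ω, Y j ω ^ p ∂μ ≤ ∫ ω, S' ω ^ p ∂μ := by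
      rw [← integral_finset_sum Finset.univ (fun j _ => hYint j)]
      refine integral_mono (integrable_finset_sum Finset.univ (fun j _ => hYint j)) hiS'p
        fun ω => ?_
      exact sum_rpow_le_rpow_sum Finset.univ _ (fun j _ => hYnn j ω) hp
    have hchain : p/2 ≤ 5 ^ p * ∫ ω, S' ω ^ p ∂μ := by
      have h5p : (0:ℝ) ≤ 5 ^ p := Real.rpow_nonneg (by norm_num) p
      calc p/2 ≤ ∑ j, Real.log (bf j) := hcaseB
        _ ≤ ∑ j, (bf j - 1) := Finset.sum_le_sum fun j _ => hblog j
        _ ≤ ∑ j, 5 ^ p * ∫ ω, Y j ω ^ p ∂μ := Finset.sum_le_sum fun j _ => hbint j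
        _ = 5 ^ p * ∑ j, ∫ ω, Y j ω ^ p ∂μ := by rw [Finset.mul_sum]
        _ ≤ 5 ^ p * ∫ ω, S' ω ^ p ∂μ := by nlinarith [hsumY]
    -- final numeric step for case B
    have h5pos : (0:ℝ) < 5 ^ p := Real.rpow_pos_of_pos (by norm_num) p
    have hhalf : ((1:ℝ)/2) ^ p ≤ 1/2 := by
      calc ((1:ℝ)/2) ^ p ≤ (1/2 : ℝ) ^ (1:ℝ) :=
            Real.rpow_le_rpow_of_exponent_ge (by norm_num) (by norm_num) hp
        _ = 1/2 := Real.rpow_one _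
    have h110 : ((1:ℝ)/10) ^ p = (1/2 : ℝ)^p * ((5:ℝ)^p)⁻¹ := by
      rw [← Real.inv_rpow (by norm_num : (0:ℝ) ≤ 5)]
      rw [← Real.mul_rpow (by norm_num) (by norm_num)]
      norm_num
    rw [h110]
    have hI : (0:ℝ) ≤ ∫ ω, S' ω ^ p ∂μ :=
      integral_nonneg fun ω => Real.rpow_nonneg (hS'nn ω) p
    have hinv : (0:ℝ) < ((5:ℝ)^p)⁻¹ := inv_pos.2 h5pos
    calc (1/2 : ℝ)^p * ((5:ℝ)^p)⁻¹ ≤ (p/2) * ((5:ℝ)^p)⁻¹ := by nlinarith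
      _ ≤ (5 ^ p * ∫ ω, S' ω ^ p ∂μ) * ((5:ℝ)^p)⁻¹ := by nlinarith
      _ = ∫ ω, S' ω ^ p ∂μ := by field_simp
  · -- CASE A : small parts dominate
    have hcaseA : p/2 ≤ ∑ j, Real.log (af j) := by linarith
    set T : Ω → ℝ := fun ω => ∑ j, A j ω with hT
    have hTm : Measurable T := Finset.measurable_sum _ fun j _ => hAm j
    have hTnn : ∀ ω, 0 ≤ T ω := fun ω => Finset.sum_nonneg fun j _ => hAnn j ω
    have hiA : ∀ j, Integrable (A j) μ := by
      intro j
      refine integrable_of_bounded' (hAm j) (1/4) fun ω => ?_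
      rw [abs_of_nonneg (hAnn j ω)]; exact hAle j ω
    have hiT : Integrable T μ := integrable_finset_sum _ fun j _ => hiA j
    have hiAp : ∀ j, Integrable (fun ω => A j ω ^ p) μ := by
      intro j
      refine integrable_of_bounded' (measurable_rpow_const' (hAm j) hp0') ((1/4:ℝ)^p) fun ω => ?_
      rw [abs_of_nonneg (Real.rpow_nonneg (hAnn j ω) p)]
      exact Real.rpow_le_rpow (hAnn j ω) (hAle j ω) hp0'
    have hiTp : Integrable (fun ω => T ω ^ p) μ :=
      integrable_rpow_sum Finset.univ A hAm hAnn hiAp hp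
    have hTS' : ∫ ω, T ω ^ p ∂μ ≤ ∫ ω, S' ω ^ p ∂μ := by
      refine integral_mono hiTp hiS'p fun ω => ?_
      refine Real.rpow_le_rpow (hTnn ω) ?_ hp0'
      exact Finset.sum_le_sum fun j _ => hAleY j ω
    suffices hKEY2 : (1/10 : ℝ)^p ≤ ∫ ω, T ω ^ p ∂μ by linarith
    rcases le_or_gt p 4 with hp4 | hp4
    · -- small p: first moment route
      have hEe := Real.exp_one_gt_d9
      have hEe' := Real.exp_one_lt_d9
      have haj : ∀ j, Real.log (af j) ≤ p * (Real.exp 1 - 1) * ∫ ω, A j ω ∂μ := by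
        intro j
        have hpt : ∀ ω, (1 + A j ω) ^ p ≤ 1 + p * (Real.exp 1 - 1) * A j ω := by
          intro ω
          have hA0 := hAnn j ω
          have hA4 := hAle j ω
          have c1 : (1 + A j ω) ^ p ≤ Real.exp (A j ω * p) := by
            rw [Real.exp_mul]
            refine Real.rpow_le_rpow (by linarith) ?_ hp0'
            linarith [Real.add_one_le_exp (A j ω)]
          have c2 : Real.exp (A j ω * p) ≤ 1 + (Real.exp (p/4) - 1) * (4 * A j ω) := by
            have h := exp_le_chord (x := A j ω * p) (c := p/4)
              (mul_nonneg hA0 hp0') (by nlinarith) (by linarith)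
            have : A j ω * p / (p/4) = 4 * A j ω := by field_simp
            rw [this] at h
            exact h
          have c3 : Real.exp (p/4) - 1 ≤ (p/4) * (Real.exp 1 - 1) := by
            have h := exp_le_chord (x := p/4) (c := 1) (by linarith) (by linarith) one_pos
            rw [div_one] at h
            nlinarith
          have hexp4 : (0:ℝ) ≤ Real.exp (p/4) - 1 := by
            have : (1:ℝ) = Real.exp 0 := Real.exp_zero.symm
            rw [this]
            have := Real.exp_le_exp.2 (show (0:ℝ) ≤ p/4 by linarith)
            linarith
          nlinarith
        have h1 : af j - 1 ≤ p * (Real.exp 1 - 1) * ∫ ω, A j ω ∂μ := by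
          have h2 : af j ≤ ∫ ω, (1 + p * (Real.exp 1 - 1) * A j ω) ∂μ := by
            rw [haf]
            exact integral_mono (hi1A j) ((integrable_const 1).add ((hiA j).const_mul _)) hpt
          have h3 : ∫ ω, (1 + p * (Real.exp 1 - 1) * A j ω) ∂μ
              = 1 + p * (Real.exp 1 - 1) * ∫ ω, A j ω ∂μ := by
            rw [integral_add (integrable_const 1) ((hiA j).const_mul _), hone,
              integral_const_mul]
          rw [h3] at h2
          linarith
        calc Real.log (af j) ≤ af j - 1 :=
            Real.log_le_sub_one_of_pos (by linarith [ha1 j])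
          _ ≤ _ := h1
      have hTint : ∫ ω, T ω ∂μ = ∑ j, ∫ ω, A j ω ∂μ :=
        integral_finset_sum _ fun j _ => hiA j
      have hTlb : 1/(2*(Real.exp 1 - 1)) ≤ ∫ ω, T ω ∂μ := by
        have h1 : p/2 ≤ p * (Real.exp 1 - 1) * ∫ ω, T ω ∂μ := by
          calc p/2 ≤ ∑ j, Real.log (af j) := hcaseA
            _ ≤ ∑ j, p * (Real.exp 1 - 1) * ∫ ω, A j ω ∂μ :=
                Finset.sum_le_sum fun j _ => haj j
            _ = p * (Real.exp 1 - 1) * ∑ j, ∫ ω, A j ω ∂μ := by rw [Finset.mul_sum]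
            _ = p * (Real.exp 1 - 1) * ∫ ω, T ω ∂μ := by rw [hTint]
        have he1 : (0:ℝ) < Real.exp 1 - 1 := by nlinarith
        have h2 : p * (1/2) ≤ p * ((Real.exp 1 - 1) * ∫ ω, T ω ∂μ) := by
          linear_combination h1
        have h3 : (1:ℝ)/2 ≤ (Real.exp 1 - 1) * ∫ ω, T ω ∂μ :=
          le_of_mul_le_mul_left (by linarith) hp0
        rw [div_le_iff₀ (by nlinarith)]
        nlinarith [h3]
      set θ : ℝ := 1/(2*(Real.exp 1 - 1)) with hθ
      have hθpos : 0 < θ := by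
        rw [hθ]
        exact div_pos one_pos (by nlinarith [hEe])
      have htan : ∀ ω, θ^p + p * θ^(p-1) * (T ω - θ) ≤ T ω ^ p :=
        fun ω => tangent_rpow hθpos (hTnn ω) hp
      have hlin_int : Integrable (fun ω => θ^p + p * θ^(p-1) * (T ω - θ)) μ := by
        have h := (integrable_const (μ := μ) (θ^p - p * θ^(p-1) * θ)).add
          (hiT.const_mul (p * θ^(p-1)))
        refine h.congr (Filter.Eventually.of_forall fun ω => ?_)
        simp only [Pi.add_apply]
        ring
      have hintlhs : ∫ ω, (θ^p + p * θ^(p-1) * (T ω - θ)) ∂μ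
          = θ^p + p * θ^(p-1) * ((∫ ω, T ω ∂μ) - θ) := by
        have h0 : ∫ ω, (θ^p + p * θ^(p-1) * (T ω - θ)) ∂μ
            = ∫ ω, ((θ^p - p * θ^(p-1) * θ) + p * θ^(p-1) * T ω) ∂μ := by
          congr 1; funext ω; ring
        rw [h0, integral_add (integrable_const _) (hiT.const_mul _),
          integral_const, integral_const_mul]
        simp only [probReal_univ, one_smul]
        ring
      have hTp_lb : θ^p ≤ ∫ ω, T ω ^ p ∂μ := by
        have h1 : ∫ ω, (θ^p + p * θ^(p-1) * (T ω - θ)) ∂μ ≤ ∫ ω, T ω ^ p ∂μ :=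
          integral_mono hlin_int hiTp htan
        rw [hintlhs] at h1
        have h2 : (0:ℝ) ≤ p * θ^(p-1) * ((∫ ω, T ω ∂μ) - θ) := by
          have h0 := Real.rpow_nonneg hθpos.le (p-1)
          exact mul_nonneg (mul_nonneg hp0.le h0) (by linarith [hTlb])
        linarith
      refine le_trans ?_ hTp_lb
      refine Real.rpow_le_rpow (by norm_num) ?_ hp0'
      rw [hθ, div_le_div_iff₀ (by norm_num) (by nlinarith)]
      nlinarith
    · -- large p: stopping time route
      set V : Fin n → Ω → ℝ := fun j ω => 1 + A j ω with hV
      have hVm : ∀ j, Measurable (V j) := fun j => measurable_const.add (hAm j)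
      have hVb : ∀ j ω, V j ω ∈ Set.Icc 1 (5/4 : ℝ) := by
        intro j ω
        constructor
        · simp only [hV]; linarith [hAnn j ω]
        · simp only [hV]; linarith [hAle j ω]
      have hVind : iIndepFun V μ := by
        have hg : ∀ _j : Fin n, Measurable (fun x : ℝ => 1 + (if x/ε ≤ 1/4 then x/ε else 0)) :=
          fun _ => measurable_const.add
            (Measurable.ite (measurableSet_le (measurable_id.div_const ε) measurable_const)
              (measurable_id.div_const ε) measurable_const)
        have h := hindep.comp (fun _ => fun x : ℝ => 1 + (if x/ε ≤ 1/4 then x/ε else 0)) hg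
        have hfam : (fun j => (fun x : ℝ => 1 + (if x/ε ≤ 1/4 then x/ε else 0)) ∘ X j) = V := by
          funext j ω
          simp only [Function.comp_apply, hV, hAdef, hYdef]
        rwa [hfam] at h
      set K : ℝ := Real.exp (1/4) with hK
      have hK1 : 1 ≤ K := by
        rw [hK, show (1:ℝ) = Real.exp 0 from Real.exp_zero.symm]
        exact Real.exp_le_exp.2 (by norm_num)
      set Z : Ω → ℝ := fun ω => ∏ j, V j ω with hZ
      set M : ℝ := ∏ j, af j with hM
      have haV : ∀ j, af j = ∫ ω, V j ω ^ p ∂μ := fun j => rfl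
      have hM1 : 1 ≤ M := by
        rw [hM]
        calc (1:ℝ) = ∏ _j : Fin n, 1 := by rw [Finset.prod_const_one]
          _ ≤ ∏ j, af j := Finset.prod_le_prod (fun j _ => zero_le_one) (fun j _ => ha1 j)
      have hMlb : Real.exp (p/2) ≤ M := by
        have h1 : Real.exp (∑ j, Real.log (af j)) = M := by
          rw [Real.exp_sum, hM]
          congr 1; funext j
          exact Real.exp_log (by linarith [ha1 j])
        calc Real.exp (p/2) ≤ Real.exp (∑ j, Real.log (af j)) := Real.exp_le_exp.2 hcaseA
          _ = M := h1
      -- E Z^p = M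
      have hZpM : ∫ ω, Z ω ^ p ∂μ = M := by
        have h1 : ∀ ω, Z ω ^ p = ∏ j, V j ω ^ p := by
          intro ω
          rw [hZ]
          exact (Real.finset_prod_rpow Finset.univ _ (fun j _ => by linarith [(hVb j ω).1]) p).symm
        have hWind : iIndepFun (fun j ω => V j ω ^ p) μ := by
          have h := hVind.comp (fun _ => fun x : ℝ => x ^ p)
            (fun _ => measurable_rpow_const' measurable_id hp0')
          have hfam : (fun j => (fun x : ℝ => x ^ p) ∘ V j) = fun j ω => V j ω ^ p := by
            funext j ω; rfl
          rwa [hfam] at h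
        have hWm : ∀ j, Measurable fun ω => V j ω ^ p :=
          fun j => measurable_rpow_const' (hVm j) hp0'
        have h54p : (1:ℝ) ≤ (5/4:ℝ)^p := by
          calc (1:ℝ) = 1 ^ p := (Real.one_rpow p).symm
            _ ≤ (5/4:ℝ)^p := Real.rpow_le_rpow zero_le_one (by norm_num) hp0'
        have hWb : ∀ j ω, (fun j ω => V j ω ^ p) j ω ∈ Set.Icc 1 ((5/4:ℝ)^p) := by
          intro j ω
          constructor
          · calc (1:ℝ) = 1 ^ p := (Real.one_rpow p).symm
              _ ≤ V j ω ^ p := Real.rpow_le_rpow zero_le_one (hVb j ω).1 hp0'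
          · exact Real.rpow_le_rpow (by linarith [(hVb j ω).1]) (hVb j ω).2 hp0'
        have h2 := integral_prod_of_indep (fun j ω => V j ω ^ p) hWind hWm h54p hWb Finset.univ
        calc ∫ ω, Z ω ^ p ∂μ = ∫ ω, ∏ j, V j ω ^ p ∂μ := by
              congr 1; funext ω; exact h1 ω
          _ = ∏ j, ∫ ω, V j ω ^ p ∂μ := h2
          _ = M := by rw [hM]
      -- tail comparison
      have hZexp : ∀ ω, Z ω ≤ Real.exp (T ω) := by
        intro ω
        rw [hZ, hT, Real.exp_sum]
        refine Finset.prod_le_prod (fun j _ => by linarith [(hVb j ω).1]) fun j _ => ?_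
        simp only [hV]
        linarith [Real.add_one_le_exp (A j ω)]
      have htail : μ {ω | K < Z ω} ≤ μ {ω | 1/4 < T ω} := by
        refine measure_mono fun ω hω => ?_
        simp only [Set.mem_setOf_eq] at hω ⊢
        have h1 : Real.exp (1/4) < Real.exp (T ω) := by
          calc Real.exp (1/4) = K := by rw [hK]
            _ < Z ω := hω
            _ ≤ Real.exp (T ω) := hZexp ω
        exact Real.exp_lt_exp.1 h1
      set q : ℝ := (μ {ω | 1/4 < T ω}).toReal with hq
      set D : ℝ := 5/4*K with hD
      have hD1 : (1:ℝ) ≤ D := by rw [hD]; nlinarith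
      have hDp_pos : (0:ℝ) < D ^ p := Real.rpow_pos_of_pos (by linarith) p
      -- upper bound for M from the stopping-time lemma
      have hMub : M ≤ K^p + D^p * q * M := by
        have hZm : Measurable Z := Finset.measurable_prod _ fun j _ => hVm j
        have hZ1 : ∀ ω, 1 ≤ Z ω := fun ω => (prod_mem_Icc V (by norm_num) hVb Finset.univ ω).1
        have hZC : ∀ ω, Z ω ≤ (5/4:ℝ)^(Finset.univ : Finset (Fin n)).card :=
          fun ω => (prod_mem_Icc V (by norm_num) hVb Finset.univ ω).2
        have hstop := stopping_bound V hVind hVm hVb hp hK1 Finset.univ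
        -- identify the set/product in hstop
        have hTset : MeasurableSet {ω | K < Z ω} := measurableSet_lt measurable_const hZm
        have hint_in : Integrable (fun ω => Set.indicator {ω' | K < Z ω'} (fun ω' => Z ω' ^ p) ω) μ := by
          refine integrable_of_bounded'
            ((measurable_rpow_const' hZm hp0').indicator hTset) (((5/4:ℝ)^(Finset.univ : Finset (Fin n)).card)^p)
            fun ω => ?_
          have hb0 : (0:ℝ) ≤ ((5/4:ℝ)^(Finset.univ : Finset (Fin n)).card)^p :=
            Real.rpow_nonneg (by positivity) p
          rw [abs_le]
          constructor
          · have h0 := Set.indicator_nonneg (s := {ω' | K < Z ω'})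
              (fun ω' _ => Real.rpow_nonneg (by linarith [hZ1 ω'] : (0:ℝ) ≤ Z ω') p) ω
            linarith
          · exact Set.indicator_le'
              (fun ω' _ => Real.rpow_le_rpow (by linarith [hZ1 ω']) (hZC ω') hp0')
              (fun ω' _ => hb0) ω
        have hint_out : Integrable (fun ω => Set.indicator {ω' | K < Z ω'}ᶜ (fun ω' => Z ω' ^ p) ω) μ := by
          refine integrable_of_bounded'
            ((measurable_rpow_const' hZm hp0').indicator hTset.compl) (((5/4:ℝ)^(Finset.univ : Finset (Fin n)).card)^p)
            fun ω => ?_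
          have hb0 : (0:ℝ) ≤ ((5/4:ℝ)^(Finset.univ : Finset (Fin n)).card)^p :=
            Real.rpow_nonneg (by positivity) p
          rw [abs_le]
          constructor
          · have h0 := Set.indicator_nonneg (s := {ω' | K < Z ω'}ᶜ)
              (fun ω' _ => Real.rpow_nonneg (by linarith [hZ1 ω'] : (0:ℝ) ≤ Z ω') p) ω
            linarith
          · exact Set.indicator_le'
              (fun ω' _ => Real.rpow_le_rpow (by linarith [hZ1 ω']) (hZC ω') hp0')
              (fun ω' _ => hb0) ω
        have hdecomp : ∫ ω, Z ω ^ p ∂μ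
            = (∫ ω, Set.indicator {ω' | K < Z ω'} (fun ω' => Z ω' ^ p) ω ∂μ)
              + ∫ ω, Set.indicator {ω' | K < Z ω'}ᶜ (fun ω' => Z ω' ^ p) ω ∂μ := by
          rw [← integral_add hint_in hint_out]
          congr 1; funext ω
          have := Set.indicator_self_add_compl {ω' | K < Z ω'} (fun ω' => Z ω' ^ p)
          calc Z ω ^ p = (Set.indicator {ω' | K < Z ω'} (fun ω' => Z ω' ^ p)
                + Set.indicator {ω' | K < Z ω'}ᶜ (fun ω' => Z ω' ^ p)) ω := by rw [this]
            _ = _ := rfl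
        have hout_le : ∫ ω, Set.indicator {ω' | K < Z ω'}ᶜ (fun ω' => Z ω' ^ p) ω ∂μ ≤ K^p := by
          have hKp : (0:ℝ) ≤ K ^ p := Real.rpow_nonneg (by linarith) p
          calc ∫ ω, Set.indicator {ω' | K < Z ω'}ᶜ (fun ω' => Z ω' ^ p) ω ∂μ
              ≤ ∫ _ω, K ^ p ∂μ := by
                refine integral_mono hint_out (integrable_const _) fun ω => ?_
                refine Set.indicator_le' (fun ω' hω' => ?_) (fun ω' _ => hKp) ω
                simp only [Set.mem_compl_iff, Set.mem_setOf_eq, not_lt] at hω'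
                exact Real.rpow_le_rpow (by linarith [hZ1 ω']) hω' hp0'
            _ = K ^ p := by rw [integral_const]; simp [measure_univ]
        have hin_le : ∫ ω, Set.indicator {ω' | K < Z ω'} (fun ω' => Z ω' ^ p) ω ∂μ
            ≤ D^p * q * M := by
          have hμ1 : (μ {ω' | K < Z ω'}).toReal ≤ q := by
            rw [hq]
            exact ENNReal.toReal_le_toReal (measure_ne_top μ _) (measure_ne_top μ _) |>.2 htail
          have hstep := hstop
          have hprodM : ∏ j, ∫ ω, V j ω ^ p ∂μ = M := by rw [hM]
          calc ∫ ω, Set.indicator {ω' | K < Z ω'} (fun ω' => Z ω' ^ p) ω ∂μ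
              = ∫ ω, Set.indicator {ω' | K < ∏ i, V i ω'} (fun ω' => (∏ i, V i ω') ^ p) ω ∂μ := rfl
            _ ≤ (5/4*K)^p * (μ {ω' | K < ∏ i, V i ω'}).toReal * ∏ i, ∫ ω, V i ω ^ p ∂μ := hstep
            _ = D^p * (μ {ω' | K < Z ω'}).toReal * M := by rw [← hD, hprodM]
            _ ≤ D^p * q * M := by
                exact mul_le_mul_of_nonneg_right
                  (mul_le_mul_of_nonneg_left hμ1 hDp_pos.le) (by linarith [hM1])
        calc M = ∫ ω, Z ω ^ p ∂μ := hZpM.symm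
          _ = _ := hdecomp
          _ ≤ D^p * q * M + K^p := by linarith
          _ = K^p + D^p * q * M := by ring
      -- dichotomy on q
      rcases lt_or_ge q (1/2 * (D^p)⁻¹) with hqs | hqs
      · -- impossible: M would be too small
        exfalso
        have hq0 : 0 ≤ q := ENNReal.toReal_nonneg
        have hDq : D^p * q < 1/2 := by
          have h := mul_lt_mul_of_pos_left hqs hDp_pos
          have h2 : D^p * (1/2 * (D^p)⁻¹) = 1/2 := by
            rw [mul_comm (1/2:ℝ), ← mul_assoc, mul_inv_cancel₀ hDp_pos.ne', one_mul]
          rw [h2] at h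
          exact h
        have hM2 : M ≤ 2 * K^p := by nlinarith
        have hKp : K ^ p = Real.exp (1/4 * p) := by
          rw [hK, ← Real.exp_mul]
        have hhalfp : Real.exp (p/2) = Real.exp (1/4*p) * Real.exp (1/4*p) := by
          rw [← Real.exp_add]; ring_nf
        have hgt : Real.exp 1 ≤ Real.exp (1/4*p) := Real.exp_le_exp.2 (by linarith)
        have he := Real.exp_one_gt_d9
        nlinarith [hMlb, Real.exp_pos (1/4*p)]
      · -- Markov route
        have hmarkov := mul_meas_ge_le_integral_of_nonneg
          (Filter.Eventually.of_forall fun ω => Real.rpow_nonneg (hTnn ω) p) hiTp ((1/4:ℝ)^p)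
        have hsub : μ {ω | 1/4 < T ω} ≤ μ {ω | (1/4:ℝ)^p ≤ T ω ^ p} := by
          refine measure_mono fun ω hω => ?_
          simp only [Set.mem_setOf_eq] at hω ⊢
          exact Real.rpow_le_rpow (by norm_num) hω.le hp0'
        have hq_le : q ≤ (μ {ω | (1/4:ℝ)^p ≤ T ω ^ p}).toReal := by
          rw [hq]
          exact (ENNReal.toReal_le_toReal (measure_ne_top μ _) (measure_ne_top μ _)).2 hsub
        have h4p : (0:ℝ) < (1/4:ℝ)^p := Real.rpow_pos_of_pos (by norm_num) p
        have hTp_lb : (1/4:ℝ)^p * q ≤ ∫ ω, T ω ^ p ∂μ := by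
          calc (1/4:ℝ)^p * q ≤ (1/4:ℝ)^p * (μ {ω | (1/4:ℝ)^p ≤ T ω ^ p}).toReal := by
                nlinarith
            _ ≤ ∫ ω, T ω ^ p ∂μ := hmarkov
        -- numeric endgame
        have hKlt : K < 3/2 := by
          have h := exp_le_chord (x := (1/4:ℝ)) (c := 1) (by norm_num) (by norm_num) one_pos
          rw [div_one] at h
          have he := Real.exp_one_lt_d9
          rw [hK]
          nlinarith
        have hK2 : K/2 ≤ 1 := by linarith
        have hK2pos : 0 < K/2 := by linarith
        have hKp4 : (K/2)^p ≤ (K/2)^(4:ℝ) :=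
          Real.rpow_le_rpow_of_exponent_ge hK2pos hK2 (by linarith)
        have hKp4' : (K/2)^(4:ℝ) = Real.exp 1 / 16 := by
          rw [show ((4:ℝ) = ((4:ℕ):ℝ)) by norm_num, Real.rpow_natCast]
          have : K ^ (4:ℕ) = Real.exp 1 := by
            rw [hK, ← Real.exp_nat_mul]
            norm_num
          field_simp [this]
          rw [this]; ring
        have hfinal : 2 * (K/2)^p ≤ 1 := by
          have he := Real.exp_one_lt_d9
          rw [hKp4'] at hKp4
          nlinarith
        -- (1/10)^p ≤ (1/4)^p * (1/2) * (D^p)⁻¹ ≤ (1/4)^p * q ≤ ∫ T^p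
        have hDdiv : (1/10:ℝ) * D = (1/4) * (K/2) := by rw [hD]; ring
        have hmul1 : ((1:ℝ)/10)^p * D^p = (1/4:ℝ)^p * (K/2)^p := by
          rw [← Real.mul_rpow (by norm_num) (by linarith : (0:ℝ) ≤ D), hDdiv,
            Real.mul_rpow (by norm_num) hK2pos.le]
        have hmul2 : ((1:ℝ)/10)^p * D^p ≤ (1/4:ℝ)^p * (1/2) := by
          rw [hmul1]
          exact mul_le_mul_of_nonneg_left (by linarith [hfinal]) h4p.le
        have h3 : ((1:ℝ)/10)^p ≤ (1/4:ℝ)^p * (1/2) * (D^p)⁻¹ := by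
          have heq : (1/4:ℝ)^p * (1/2) * (D^p)⁻¹ = ((1/4:ℝ)^p * (1/2)) / (D^p) := by ring
          rw [heq, le_div_iff₀ hDp_pos]
          exact hmul2
        have h4 : (1/4:ℝ)^p * (1/2) * (D^p)⁻¹ ≤ (1/4:ℝ)^p * q := by
          have h5 : (1/2) * (D^p)⁻¹ ≤ q := hqs
          rw [mul_assoc]
          exact mul_le_mul_of_nonneg_left h5 h4p.le
        linarith
end

section
/- There exists a constant α > 0 (independent of p) such that the following holds for every real p ≥ 1 and every scalar Θ > 0: let {X_{i,j}}_{i ∈ [m], j ∈ [n]} be independent random variables taking values in [0, αΘ] and let S_i := Σ_j X_{i,j}. If E (Σ_i S_i^p)^{1/p} ≤ Θ, then Σ_{i,j} E X_{i,j}^p ≤ (4Θ)^p. -/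
open MeasureTheory ProbabilityTheory

private lemma aux_add_rpow {p : ℝ} (hp : 1 ≤ p) {x y : ℝ} (hx : 0 ≤ x) (hy : 0 ≤ y) :
    x ^ p + y ^ p ≤ (x + y) ^ p := by
  lift x to NNReal using hx
  lift y to NNReal using hy
  have := NNReal.add_rpow_le_rpow_add x y hp
  exact_mod_cast this

private lemma aux_sum_rpow {ι : Type*} {p : ℝ} (hp : 1 ≤ p) (s : Finset ι) (f : ι → ℝ)
    (hf : ∀ i, 0 ≤ f i) : ∑ i ∈ s, f i ^ p ≤ (∑ i ∈ s, f i) ^ p := by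
  classical
  induction s using Finset.induction_on with
  | empty =>
    simp [Real.zero_rpow (by positivity : p ≠ 0)]
  | insert a s hns ih =>
    rw [Finset.sum_insert hns, Finset.sum_insert hns]
    calc f a ^ p + ∑ i ∈ s, f i ^ p ≤ f a ^ p + (∑ i ∈ s, f i) ^ p := by
          gcongr
      _ ≤ (f a + ∑ i ∈ s, f i) ^ p :=
          aux_add_rpow hp (hf a) (Finset.sum_nonneg fun i _ => hf i)

set_option maxHeartbeats 1000000 in
theorem stmt_5 : ∃ α : ℝ, 0 < α ∧
    ∀ (p : ℝ), 1 ≤ p → ∀ (Θ : ℝ), 0 < Θ →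
    ∀ (Ω : Type*) (_ : MeasurableSpace Ω) (μ : Measure Ω), IsProbabilityMeasure μ →
    ∀ (m n : ℕ) (X : Fin m × Fin n → Ω → ℝ),
      (∀ ij, Measurable (X ij)) → (∀ ij ω, X ij ω ∈ Set.Icc 0 (α * Θ)) →
      iIndepFun X μ →
      ∫ ω, (∑ i, (∑ j, X (i, j) ω) ^ p) ^ (1 / p) ∂μ ≤ Θ →
      ∑ ij : Fin m × Fin n, ∫ ω, X ij ω ^ p ∂μ ≤ (4 * Θ) ^ p := by
  refine ⟨1, one_pos, ?_⟩
  intro p hp Θ hΘ Ω mΩ μ hμ m n X hXm hXb hind hEZ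
  have hp0 : 0 < p := lt_of_lt_of_le one_pos hp
  have hX0 : ∀ ij ω, 0 ≤ X ij ω := fun ij ω => (hXb ij ω).1
  have hXΘ : ∀ ij ω, X ij ω ≤ Θ := fun ij ω => by
    have := (hXb ij ω).2; rwa [one_mul] at this
  -- the p-th powers
  set Y : Fin m × Fin n → Ω → ℝ := fun ij ω => X ij ω ^ p with hYdef
  have hφm : Measurable fun x : ℝ => x ^ p :=
    (Real.continuous_rpow_const hp0.le).measurable
  have hY0 : ∀ ij ω, 0 ≤ Y ij ω := fun ij ω => Real.rpow_nonneg (hX0 ij ω) p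
  set b : ℝ := Θ ^ p with hbdef
  have hb0 : 0 < b := Real.rpow_pos_of_pos hΘ p
  have hYb : ∀ ij ω, Y ij ω ≤ b := fun ij ω =>
    Real.rpow_le_rpow (hX0 ij ω) (hXΘ ij ω) hp0.le
  have hYm : ∀ ij, Measurable (Y ij) := fun ij => hφm.comp (hXm ij)
  have hYint : ∀ ij, Integrable (Y ij) μ := fun ij =>
    (integrable_const b).mono' (hYm ij).aestronglyMeasurable
      (ae_of_all _ fun ω => by
        rw [Real.norm_eq_abs, abs_of_nonneg (hY0 ij ω)]; exact hYb ij ω)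
  have hYℒ2 : ∀ ij, MemLp (Y ij) 2 μ := fun ij =>
    MemLp.of_bound (hYm ij).aestronglyMeasurable b
      (ae_of_all _ fun ω => by
        rw [Real.norm_eq_abs, abs_of_nonneg (hY0 ij ω)]; exact hYb ij ω)
  set T : Ω → ℝ := ∑ ij : Fin m × Fin n, Y ij with hTdef
  have hTapp : ∀ ω, T ω = ∑ ij : Fin m × Fin n, Y ij ω := fun ω => by
    simp [hTdef]
  have hTfun : T = fun ω => ∑ ij : Fin m × Fin n, Y ij ω := funext hTapp
  have hTm : Measurable T := by
    rw [hTfun]; exact Finset.measurable_sum _ fun ij _ => hYm ij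
  have hT0 : ∀ ω, 0 ≤ T ω := fun ω => by
    rw [hTapp]; exact Finset.sum_nonneg fun ij _ => hY0 ij ω
  have hTb : ∀ ω, T ω ≤ (m * n : ℝ) * b := fun ω => by
    rw [hTapp]
    calc ∑ ij : Fin m × Fin n, Y ij ω ≤ ∑ _ij : Fin m × Fin n, b :=
          Finset.sum_le_sum fun ij _ => hYb ij ω
      _ = (m * n : ℝ) * b := by
          rw [Finset.sum_const, Finset.card_univ]
          simp [nsmul_eq_mul]
  have hTint : Integrable T μ := by
    rw [hTfun]; exact integrable_finset_sum _ fun ij _ => hYint ij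
  set c : ℝ := ∫ ω, T ω ∂μ with hcdef
  have hcsum : c = ∑ ij : Fin m × Fin n, ∫ ω, Y ij ω ∂μ := by
    rw [hcdef]
    simp_rw [hTapp]
    exact integral_finset_sum _ fun ij _ => hYint ij
  -- It suffices to show c ≤ (4Θ)^p
  have hgoal : (∑ ij : Fin m × Fin n, ∫ ω, X ij ω ^ p ∂μ) = c := hcsum.symm
  rw [hgoal]
  by_contra hcon
  push_neg at hcon
  have h4Θ : 0 < (4 * Θ) ^ p := Real.rpow_pos_of_pos (by linarith) p
  have hc0 : 0 < c := lt_trans h4Θ hcon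
  -- variance bound
  have hYpair : Set.Pairwise (↑(Finset.univ : Finset (Fin m × Fin n)))
      fun ij kl => IndepFun (Y ij) (Y kl) μ := by
    intro ij _ kl _ hne
    exact (hind.indepFun hne).comp hφm hφm
  have hVarsum : variance T μ = ∑ ij : Fin m × Fin n, variance (Y ij) μ :=
    IndepFun.variance_sum (fun ij _ => hYℒ2 ij) hYpair
  have hVarY : ∀ ij, variance (Y ij) μ ≤ b * ∫ ω, Y ij ω ∂μ := by
    intro ij
    have h1 : variance (Y ij) μ ≤ μ[(Y ij) ^ 2] :=
      variance_le_expectation_sq (hYm ij).aestronglyMeasurable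
    have h2 : μ[(Y ij) ^ 2] ≤ ∫ ω, b * Y ij ω ∂μ := by
      apply integral_mono ((hYℒ2 ij).integrable_sq) ((hYint ij).const_mul b)
      intro ω
      simp only [Pi.pow_apply]
      nlinarith [hY0 ij ω, hYb ij ω]
    calc variance (Y ij) μ ≤ μ[(Y ij) ^ 2] := h1
      _ ≤ ∫ ω, b * Y ij ω ∂μ := h2
      _ = b * ∫ ω, Y ij ω ∂μ := integral_const_mul b _
  have hVarT : variance T μ ≤ b * c := by
    rw [hVarsum, hcsum, Finset.mul_sum]
    exact Finset.sum_le_sum fun ij _ => hVarY ij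
  -- deviation bound : ∫ |T - c| ≤ sqrt (b * c)
  have hTℒ2 : MemLp T 2 μ :=
    MemLp.of_bound hTm.aestronglyMeasurable ((m * n : ℝ) * b)
      (ae_of_all _ fun ω => by
        rw [Real.norm_eq_abs, abs_of_nonneg (hT0 ω)]; exact hTb ω)
  set D : Ω → ℝ := fun ω => |T ω - c| with hDdef
  have hDm : Measurable D := (hTm.sub measurable_const).abs
  have hDb : ∀ ω, ‖D ω‖ ≤ (m * n : ℝ) * b + |c| := fun ω => by
    rw [Real.norm_eq_abs, hDdef, abs_abs]
    have h1 : |T ω| ≤ (m * n : ℝ) * b := by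
      rw [abs_of_nonneg (hT0 ω)]; exact hTb ω
    calc |T ω - c| ≤ |T ω| + |c| := abs_sub _ _
      _ ≤ (m * n : ℝ) * b + |c| := by linarith
  have hDℒ2 : MemLp D 2 μ :=
    MemLp.of_bound hDm.aestronglyMeasurable _ (ae_of_all _ fun ω => hDb ω)
  have hDint : Integrable D μ := hDℒ2.integrable one_le_two
  have hVarTeq : μ[D ^ 2] = variance T μ := by
    rw [variance_eq_integral hTm.aemeasurable]
    congr 1
    funext ω
    simp [hDdef, sq_abs, hcdef]
  have hD2 : (∫ ω, D ω ∂μ) ^ 2 ≤ variance T μ := by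
    have hv := variance_nonneg D μ
    rw [variance_eq_sub hDℒ2] at hv
    rw [← hVarTeq]
    linarith [hv]
  have hDle : ∫ ω, D ω ∂μ ≤ Real.sqrt (b * c) := by
    have h1 : (∫ ω, D ω ∂μ) ^ 2 ≤ b * c := le_trans hD2 hVarT
    have h2 : 0 ≤ ∫ ω, D ω ∂μ := integral_nonneg fun ω => abs_nonneg _
    nlinarith [Real.sq_sqrt (by positivity : (0:ℝ) ≤ b * c),
      Real.sqrt_nonneg (b * c)]
  -- expectation of min(T, c)
  set Mc : Ω → ℝ := fun ω => min (T ω) c with hMdef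
  have hMm : Measurable Mc := hTm.min measurable_const
  have hMint : Integrable Mc μ :=
    (integrable_const c).mono' hMm.aestronglyMeasurable
      (ae_of_all _ fun ω => by
        rw [Real.norm_eq_abs, abs_of_nonneg (le_min (hT0 ω) hc0.le)]
        exact min_le_right _ _)
  have hMge : c - Real.sqrt (b * c) ≤ ∫ ω, Mc ω ∂μ := by
    have hpt : ∀ ω, c - D ω ≤ Mc ω := by
      intro ω
      rcases le_total (T ω) c with h | h
      · have hd : D ω = c - T ω := by
          show |T ω - c| = c - T ω
          rw [abs_of_nonpos (by linarith)]; ring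
        have hm : Mc ω = T ω := min_eq_left h
        rw [hd, hm]; linarith
      · have hd : 0 ≤ D ω := abs_nonneg _
        have hm : Mc ω = c := min_eq_right h
        rw [hm]; linarith
    have h1 : ∫ ω, (c - D ω) ∂μ ≤ ∫ ω, Mc ω ∂μ :=
      integral_mono ((integrable_const c).sub hDint) hMint hpt
    have h2 : ∫ ω, (c - D ω) ∂μ = c - ∫ ω, D ω ∂μ := by
      rw [integral_sub (integrable_const c) hDint]
      simp
    linarith [hDle]
  -- pointwise : c^(1/p-1) * min(T,c) ≤ T^(1/p)
  have hpexp : 1 / p ≤ 1 := by rw [div_le_one hp0]; exact hp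
  have hpt2 : ∀ ω, c ^ (1 / p - 1) * Mc ω ≤ T ω ^ (1 / p) := by
    intro ω
    rcases le_total (T ω) c with h | h
    · have hm : Mc ω = T ω := min_eq_left h
      rw [hm]
      rcases eq_or_lt_of_le (hT0 ω) with h0 | h0
      · rw [← h0, mul_zero]
        exact Real.rpow_nonneg le_rfl _
      · have h1 : c ^ (1 / p - 1) ≤ T ω ^ (1 / p - 1) :=
          Real.rpow_le_rpow_of_nonpos h0 h (by linarith)
        have h2 : c ^ (1 / p - 1) * T ω ≤ T ω ^ (1 / p - 1) * T ω := by
          nlinarith [hT0 ω]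
        have h3 : T ω ^ (1 / p - 1) * T ω = T ω ^ (1 / p) := by
          nth_rewrite 2 [← Real.rpow_one (T ω)]
          rw [← Real.rpow_add h0, sub_add_cancel]
        linarith
    · have hm : Mc ω = c := min_eq_right h
      rw [hm]
      have h3 : c ^ (1 / p - 1) * c = c ^ (1 / p) := by
        nth_rewrite 2 [← Real.rpow_one c]
        rw [← Real.rpow_add hc0, sub_add_cancel]
      rw [h3]
      exact Real.rpow_le_rpow hc0.le h (by positivity)
  -- the integrand of the hypothesis dominates T^(1/p)
  set Z : Ω → ℝ := fun ω => (∑ i, (∑ j, X (i, j) ω) ^ p) ^ (1 / p) with hZdef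
  have hψm : Measurable fun x : ℝ => x ^ (1 / p) :=
    (Real.continuous_rpow_const (by positivity)).measurable
  have hS0 : ∀ (i : Fin m) ω, 0 ≤ ∑ j, X (i, j) ω :=
    fun i ω => Finset.sum_nonneg fun j _ => hX0 (i, j) ω
  have hSb : ∀ (i : Fin m) ω, (∑ j, X (i, j) ω) ≤ (n : ℝ) * Θ := fun i ω => by
    calc ∑ j, X (i, j) ω ≤ ∑ _j : Fin n, Θ := Finset.sum_le_sum fun j _ => hXΘ (i, j) ω
      _ = (n : ℝ) * Θ := by
        rw [Finset.sum_const, Finset.card_univ]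
        simp [nsmul_eq_mul]
  have hW0 : ∀ ω, 0 ≤ ∑ i, (∑ j, X (i, j) ω) ^ p :=
    fun ω => Finset.sum_nonneg fun i _ => Real.rpow_nonneg (hS0 i ω) p
  have hWm : Measurable fun ω => ∑ i, (∑ j, X (i, j) ω) ^ p :=
    Finset.measurable_sum _ fun i _ =>
      hφm.comp (Finset.measurable_sum _ fun j _ => hXm (i, j))
  have hZm : Measurable Z := hψm.comp hWm
  have hZb : ∀ ω, Z ω ≤ ((m : ℝ) * ((n : ℝ) * Θ) ^ p) ^ (1 / p) := by
    intro ω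
    apply Real.rpow_le_rpow (hW0 ω) _ (by positivity)
    calc ∑ i, (∑ j, X (i, j) ω) ^ p
        ≤ ∑ _i : Fin m, ((n : ℝ) * Θ) ^ p :=
          Finset.sum_le_sum fun i _ =>
            Real.rpow_le_rpow (hS0 i ω) (hSb i ω) hp0.le
      _ = (m : ℝ) * ((n : ℝ) * Θ) ^ p := by
          rw [Finset.sum_const, Finset.card_univ]
          simp [nsmul_eq_mul]
  have hZ0 : ∀ ω, 0 ≤ Z ω := fun ω => Real.rpow_nonneg (hW0 ω) _
  have hZint : Integrable Z μ :=
    (integrable_const _).mono' hZm.aestronglyMeasurable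
      (ae_of_all _ fun ω => by
        rw [Real.norm_eq_abs, abs_of_nonneg (hZ0 ω)]; exact hZb ω)
  have hTZ : ∀ ω, T ω ^ (1 / p) ≤ Z ω := by
    intro ω
    apply Real.rpow_le_rpow (hT0 ω) _ (by positivity)
    rw [hTapp]
    rw [Fintype.sum_prod_type]
    apply Finset.sum_le_sum
    intro i _
    exact aux_sum_rpow hp Finset.univ (fun j => X (i, j) ω) (fun j => hX0 (i, j) ω)
  -- putting everything together
  have hTprime : Integrable (fun ω => T ω ^ (1 / p)) μ :=
    (integrable_const (((m * n : ℝ) * b) ^ (1 / p))).mono'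
      ((hψm.comp hTm).aestronglyMeasurable)
      (ae_of_all _ fun ω => by
        rw [Real.norm_eq_abs, abs_of_nonneg (Real.rpow_nonneg (hT0 ω) _)]
        exact Real.rpow_le_rpow (hT0 ω) (hTb ω) (by positivity))
  have hchain1 : c ^ (1 / p - 1) * ∫ ω, Mc ω ∂μ ≤ ∫ ω, T ω ^ (1 / p) ∂μ := by
    rw [← integral_const_mul]
    exact integral_mono (hMint.const_mul _) hTprime hpt2
  have hchain2 : ∫ ω, T ω ^ (1 / p) ∂μ ≤ Θ :=
    le_trans (integral_mono hTprime hZint hTZ) hEZ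
  -- numeric conclusion
  have hcexp0 : 0 < c ^ (1 / p - 1) := Real.rpow_pos_of_pos hc0 _
  have h4b : 4 * b ≤ c := by
    have h1 : (4 : ℝ) ^ p * Θ ^ p = (4 * Θ) ^ p :=
      (Real.mul_rpow (by norm_num) hΘ.le).symm
    have h2 : (4 : ℝ) ≤ 4 ^ p := by
      nth_rewrite 1 [← Real.rpow_one (4 : ℝ)]
      exact Real.rpow_le_rpow_of_exponent_le (by norm_num) hp
    nlinarith [hb0, hcon]
  have hsqrt : Real.sqrt (b * c) ≤ c / 2 := by
    have h1 : b * c ≤ (c / 2) ^ 2 := by nlinarith [hb0.le, hc0, h4b]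
    calc Real.sqrt (b * c) ≤ Real.sqrt ((c / 2) ^ 2) := Real.sqrt_le_sqrt h1
      _ = c / 2 := Real.sqrt_sq (by linarith)
  have hcp : c ^ (1 / p - 1) * c = c ^ (1 / p) := by
    nth_rewrite 2 [← Real.rpow_one c]
    rw [← Real.rpow_add hc0, sub_add_cancel]
  have hcgt : 4 * Θ < c ^ (1 / p) := by
    have h1 : ((4 * Θ) ^ p) ^ (1 / p) < c ^ (1 / p) :=
      Real.rpow_lt_rpow h4Θ.le hcon (by positivity)
    rwa [← Real.rpow_mul (by linarith : (0:ℝ) ≤ 4 * Θ),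
      mul_one_div_cancel hp0.ne', Real.rpow_one] at h1
  have hfinal : Θ < c ^ (1 / p - 1) * ∫ ω, Mc ω ∂μ := by
    have h1 : c ^ (1 / p - 1) * (c - Real.sqrt (b * c)) ≤
        c ^ (1 / p - 1) * ∫ ω, Mc ω ∂μ := by
      apply mul_le_mul_of_nonneg_left hMge hcexp0.le
    have h2 : c / 2 ≤ c - Real.sqrt (b * c) := by linarith
    have h3 : c ^ (1 / p - 1) * (c / 2) = c ^ (1 / p) / 2 := by
      rw [← hcp]; ring
    have h4 : c ^ (1 / p - 1) * (c / 2) ≤ c ^ (1 / p - 1) * (c - Real.sqrt (b * c)) :=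
      mul_le_mul_of_nonneg_left h2 hcexp0.le
    linarith [hcgt, hΘ]
  linarith [hchain1, hchain2, hfinal]
end

section
/- There exists a constant α > 0 such that for every constant c' > 0 there exists a constant C > 0 (depending only on c') with the following property, for every real p > 1 and scalar Θ > 0: let {X_{i,j}}_{i ∈ [m], j ∈ [n]} be independent random variables taking values in [0, αΘ], let S_i := Σ_j X_{i,j}, and X̃_{i,j} := X_{i,j}/44. Suppose that for every sequence of reals v_1, …, v_m with v_i ≥ (1/α)^p for all i, one has Σ_{i=1}^m (1/v_i) · (Σ_j ν_{Θ/v_i^{1/p}, p}(X̃_{i,j}) − 1) ≤ 3, and suppose E max_i S_i ≤ c'·Θ. Then E (Σ_i S_i^p)^{1/p} ≤ C·Θ. -/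
open MeasureTheory ProbabilityTheory

namespace Stmt7Aux

lemma forall_le_add_div {a b z : ℝ} (hz : 0 ≤ z)
    (h : ∀ R : ℝ, 1 ≤ R → a ≤ b + z / R) : a ≤ b := by
  rcases eq_or_lt_of_le hz with hz0 | hz0
  · have := h 1 le_rfl
    rw [← hz0] at this
    simpa using this
  · by_contra hc
    push_neg at hc
    have hab : 0 < a - b := sub_pos.mpr hc
    have hR1 : (1:ℝ) ≤ max 1 (2 * z / (a - b)) := le_max_left _ _
    have hq : 0 < 2 * z / (a - b) := by positivity
    have h2 : z / max 1 (2 * z / (a - b)) ≤ (a - b) / 2 := by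
      have hle : z / max 1 (2 * z / (a - b)) ≤ z / (2 * z / (a - b)) :=
        div_le_div_of_nonneg_left hz hq (le_max_right _ _)
      have heq : z / (2 * z / (a - b)) = (a - b) / 2 := by
        field_simp
      linarith
    have := h _ hR1
    linarith

lemma one_add_sum_le_prod {ι : Type*} (s : Finset ι) (f : ι → ℝ) (hf : ∀ j ∈ s, 0 ≤ f j) :
    1 + ∑ j ∈ s, f j ≤ ∏ j ∈ s, (1 + f j) := by
  classical
  induction s using Finset.induction_on with
  | empty => simp
  | @insert a s ha ih =>
    rw [Finset.sum_insert ha, Finset.prod_insert ha]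
    have h0 : 0 ≤ f a := hf _ (Finset.mem_insert_self _ _)
    have ihs := ih (fun j hj => hf j (Finset.mem_insert_of_mem hj))
    have hP1 : (1:ℝ) ≤ ∏ j ∈ s, (1 + f j) := by
      refine le_trans (le_of_eq (by simp : (1:ℝ) = ∏ _j ∈ s, (1:ℝ)))
        (Finset.prod_le_prod (fun j _ => zero_le_one) ?_)
      exact
        (fun j hj => le_add_of_nonneg_right (hf j (Finset.mem_insert_of_mem hj)))
    have h1 : 1 + (f a + ∑ j ∈ s, f j) = (1 + ∑ j ∈ s, f j) + f a := by ring
    rw [h1]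
    have h2 : (1 + ∑ j ∈ s, f j) + f a ≤ (∏ j ∈ s, (1 + f j)) + f a :=
      by linarith [ihs]
    have h3 : (∏ j ∈ s, (1 + f j)) + f a ≤ (1 + f a) * ∏ j ∈ s, (1 + f j) := by
      have : f a * 1 ≤ f a * ∏ j ∈ s, (1 + f j) :=
        mul_le_mul_of_nonneg_left hP1 h0
      nlinarith
    linarith

lemma iIndepFun_precomp {Ω ι ι' β : Type*} {mΩ : MeasurableSpace Ω} {mβ : MeasurableSpace β}
    {μ : Measure Ω} {f : ι → Ω → β} {φ : ι' → ι} (hφ : Function.Injective φ)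
    (h : iIndepFun (m := fun _ => mβ) f μ) : iIndepFun (m := fun _ => mβ) (fun j => f (φ j)) μ := by
  rw [iIndepFun_iff_measure_inter_preimage_eq_mul] at h ⊢
  intro S sets hsets
  classical
  set sets' : ι → Set β := fun i =>
    if hex : ∃ j ∈ S, φ j = i then sets hex.choose else Set.univ with hsets'def
  have hkey : ∀ j ∈ S, sets' (φ j) = sets j := by
    intro j hj
    have hex : ∃ k ∈ S, φ k = φ j := ⟨j, hj, rfl⟩
    have hch : hex.choose = j := hφ hex.choose_spec.2
    simp only [hsets'def, dif_pos hex, hch]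
  have hmeas' : ∀ i, i ∈ S.image φ → MeasurableSet[mβ] (sets' i) := by
    intro i hi
    rcases Finset.mem_image.mp hi with ⟨j, hj, rfl⟩
    rw [hkey j hj]
    exact hsets j hj
  have hmain := h (S.image φ) hmeas'
  have hL : (⋂ i ∈ S.image φ, f i ⁻¹' sets' i) = ⋂ j ∈ S, (fun j => f (φ j)) j ⁻¹' sets j := by
    ext ω
    simp only [Set.mem_iInter, Finset.mem_image, forall_exists_index, and_imp]
    constructor
    · intro H j hj
      have := H (φ j) j hj rfl
      rwa [hkey j hj] at this
    · intro H i j hj hji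
      subst hji
      rw [hkey j hj]
      exact H j hj
  have hR : ∏ i ∈ S.image φ, μ (f i ⁻¹' sets' i)
      = ∏ j ∈ S, μ ((fun j => f (φ j)) j ⁻¹' sets j) := by
    rw [Finset.prod_image (fun x _ y _ hxy => hφ hxy)]
    exact Finset.prod_congr rfl fun j hj => by rw [hkey j hj]
  rw [hL, hR] at hmain
  exact hmain

lemma integral_prod_eq_prod {Ω ι : Type*} [MeasurableSpace Ω] {μ : Measure Ω}
    [IsProbabilityMeasure μ] {F : ι → Ω → ℝ} (hmeas : ∀ j, Measurable (F j))
    (hnn : ∀ j ω, 0 ≤ F j ω)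
    (hindep : iIndepFun F μ) (s : Finset ι) :
    ∫ ω, ∏ j ∈ s, F j ω ∂μ = ∏ j ∈ s, ∫ ω, F j ω ∂μ := by
  classical
  induction s using Finset.induction_on with
  | empty => simp
  | @insert a s ha ih =>
    have hI : IndepFun (∏ j ∈ s, F j) (F a) μ :=
      hindep.indepFun_finset_prod_of_notMem hmeas ha
    have hXfun : (∏ j ∈ s, F j) = fun ω => ∏ j ∈ s, F j ω := by
      funext ω
      exact Finset.prod_apply ω s F
    have hXnn : 0 ≤ (∏ j ∈ s, F j) := by
      intro ω
      rw [hXfun]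
      exact Finset.prod_nonneg fun j _ => hnn j ω
    have hXmeas : Measurable (∏ j ∈ s, F j) := by
      rw [hXfun]
      exact Finset.measurable_prod s fun j _ => hmeas j
    have key := hI.integral_mul_eq_mul_integral
      hXmeas.aestronglyMeasurable (hmeas a).aestronglyMeasurable
    calc ∫ ω, ∏ j ∈ Insert.insert a s, F j ω ∂μ
        = ∫ ω, ((∏ j ∈ s, F j) * F a) ω ∂μ := by
          congr 1
          funext ω
          rw [Finset.prod_insert ha]
          simp only [Pi.mul_apply]
          rw [hXfun]
          ring
      _ = (∫ ω, (∏ j ∈ s, F j) ω ∂μ) * ∫ ω, F a ω ∂μ := key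
      _ = (∫ ω, ∏ j ∈ s, F j ω ∂μ) * ∫ ω, F a ω ∂μ := by rw [hXfun]
      _ = ∏ j ∈ Insert.insert a s, ∫ ω, F j ω ∂μ := by
          rw [Finset.prod_insert ha, ih]
          ring

end Stmt7Aux

open Stmt7Aux

theorem stmt_7 : ∃ α : ℝ, 0 < α ∧
    ∀ (c' : ℝ), 0 < c' → ∃ C : ℝ, 0 < C ∧
    ∀ (p : ℝ), 1 < p → ∀ (Θ : ℝ), 0 < Θ →
    ∀ (Ω : Type*) (_ : MeasurableSpace Ω) (μ : Measure Ω), IsProbabilityMeasure μ →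
    ∀ (m n : ℕ) (X : Fin m × Fin n → Ω → ℝ),
      (∀ ij, Measurable (X ij)) → (∀ ij ω, X ij ω ∈ Set.Icc 0 (α * Θ)) →
      iIndepFun X μ →
      (∀ (v : Fin m → ℝ), (∀ i, (1 / α) ^ p ≤ v i) →
        ∑ i, (1 / v i) *
            ((∑ j, nu μ p (Θ / v i ^ (1 / p)) (fun ω => X (i, j) ω / 44)) - 1) ≤ 3) →
      ∫ ω, ⨆ i, ∑ j, X (i, j) ω ∂μ ≤ c' * Θ →
      ∫ ω, (∑ i, (∑ j, X (i, j) ω) ^ p) ^ (1 / p) ∂μ ≤ C * Θ := by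
  classical
  refine ⟨1, one_pos, fun c' _hc' => ⟨44 * Real.exp 4, by positivity, ?_⟩⟩
  intro p hp Θ hΘ Ω mΩ μ hμ m n X hXmeas hXmem hXindep hnu _hmax
  have hp0 : (0:ℝ) < p := lt_trans one_pos hp
  have hpne : p ≠ 0 := ne_of_gt hp0
  have hX0 : ∀ ij ω, 0 ≤ X ij ω := fun ij ω => (hXmem ij ω).1
  have hX1 : ∀ ij ω, X ij ω ≤ Θ := fun ij ω => by
    have := (hXmem ij ω).2
    rwa [one_mul] at this
  set S : Fin m → Ω → ℝ := fun i ω => ∑ j, X (i, j) ω with hSdef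
  have hSmeas : ∀ i, Measurable (S i) := fun i =>
    Finset.measurable_sum _ fun j _ => hXmeas (i, j)
  have hS0 : ∀ i ω, 0 ≤ S i ω := fun i ω => Finset.sum_nonneg fun j _ => hX0 (i, j) ω
  have hSle : ∀ i ω, S i ω ≤ n * Θ := by
    intro i ω
    calc S i ω ≤ ∑ _j : Fin n, Θ := Finset.sum_le_sum fun j _ => hX1 (i, j) ω
      _ = n * Θ := by simp [Finset.sum_const, Finset.card_univ, nsmul_eq_mul]
  set B : Fin m → ℝ := fun i => ∫ ω, (S i ω) ^ p ∂μ with hBdef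
  have hSpmeas : ∀ i, Measurable (fun ω => S i ω ^ p) := fun i =>
    (Real.continuous_rpow_const hp0.le).measurable.comp (hSmeas i)
  have hSpint : ∀ i, Integrable (fun ω => S i ω ^ p) μ := by
    intro i
    refine Integrable.mono' (integrable_const ((n * Θ) ^ p))
      (hSpmeas i).aestronglyMeasurable (ae_of_all _ fun ω => ?_)
    rw [Real.norm_eq_abs, abs_of_nonneg (Real.rpow_nonneg (hS0 i ω) p)]
    exact Real.rpow_le_rpow (hS0 i ω) (hSle i ω) hp0.le
  have hB0 : ∀ i, 0 ≤ B i := fun i =>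
    integral_nonneg fun ω => Real.rpow_nonneg (hS0 i ω) p
  -- facts about the nu-integrands
  have hFmeas : ∀ (i : Fin m) (j : Fin n) (ε : ℝ),
      Measurable (fun ω => (1 + X (i, j) ω / 44 / ε) ^ p) := fun i j ε =>
    (Real.continuous_rpow_const hp0.le).measurable.comp
      (measurable_const.add (((hXmeas (i, j)).div_const 44).div_const ε))
  have hF1 : ∀ (i : Fin m) (j : Fin n) (ε : ℝ), 0 < ε →
      ∀ ω, 1 ≤ (1 + X (i, j) ω / 44 / ε) ^ p := by
    intro i j ε hε ω
    have hxx : 0 ≤ X (i, j) ω / 44 / ε := by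
      have := hX0 (i, j) ω
      positivity
    have h1 : (1:ℝ) ≤ 1 + X (i, j) ω / 44 / ε := by linarith
    calc (1:ℝ) = 1 ^ p := (Real.one_rpow p).symm
      _ ≤ _ := Real.rpow_le_rpow zero_le_one h1 hp0.le
  have hFle : ∀ (i : Fin m) (j : Fin n) (ε : ℝ), 0 < ε →
      ∀ ω, (1 + X (i, j) ω / 44 / ε) ^ p ≤ (1 + Θ / 44 / ε) ^ p := by
    intro i j ε hε ω
    have hxx : 0 ≤ X (i, j) ω / 44 / ε := by
      have := hX0 (i, j) ω
      positivity
    refine Real.rpow_le_rpow (by linarith) ?_ hp0.le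
    gcongr
    exact hX1 (i, j) ω
  have hFint : ∀ (i : Fin m) (j : Fin n) (ε : ℝ), 0 < ε →
      Integrable (fun ω => (1 + X (i, j) ω / 44 / ε) ^ p) μ := by
    intro i j ε hε
    refine Integrable.mono' (integrable_const ((1 + Θ / 44 / ε) ^ p))
      (hFmeas i j ε).aestronglyMeasurable (ae_of_all _ fun ω => ?_)
    rw [Real.norm_eq_abs, abs_of_nonneg (le_trans zero_le_one (hF1 i j ε hε ω))]
    exact hFle i j ε hε ω
  have hIF1 : ∀ (i : Fin m) (j : Fin n) (ε : ℝ), 0 < ε →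
      1 ≤ ∫ ω, (1 + X (i, j) ω / 44 / ε) ^ p ∂μ := by
    intro i j ε hε
    calc (1:ℝ) = ∫ _ω, (1:ℝ) ∂μ := by simp
      _ ≤ _ := integral_mono (integrable_const 1) (hFint i j ε hε) (hF1 i j ε hε)
  have hnu_nonneg : ∀ (i : Fin m) (j : Fin n) (ε : ℝ), 0 < ε →
      0 ≤ nu μ p ε (fun ω => X (i, j) ω / 44) := by
    intro i j ε hε
    have hval : nu μ p ε (fun ω => X (i, j) ω / 44)
        = (1 / p) * Real.log (∫ ω, (1 + X (i, j) ω / 44 / ε) ^ p ∂μ) := rfl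
    rw [hval]
    exact mul_nonneg (by positivity) (Real.log_nonneg (hIF1 i j ε hε))
  have hεpos : ∀ v : ℝ, 1 ≤ v → 0 < Θ / v ^ (1 / p) := by
    intro v hv
    have : 0 < v ^ (1 / p) := Real.rpow_pos_of_pos (lt_of_lt_of_le one_pos hv) _
    positivity
  -- key inequality
  have key : ∀ (i : Fin m) (v : ℝ), 1 ≤ v → 0 < B i →
      Real.log (B i * v / (44 * Θ) ^ p)
        ≤ p * ∑ j, nu μ p (Θ / v ^ (1 / p)) (fun ω => X (i, j) ω / 44) := by
    intro i v hv hBpos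
    have hvpos : (0:ℝ) < v := lt_of_lt_of_le one_pos hv
    have hvp : (0:ℝ) < v ^ (1 / p) := Real.rpow_pos_of_pos hvpos _
    set ε : ℝ := Θ / v ^ (1 / p) with hεdef
    have hε : 0 < ε := hεpos v hv
    set F : Fin n → Ω → ℝ := fun j ω => (1 + X (i, j) ω / 44 / ε) ^ p with hFdef
    have hFm : ∀ j, Measurable (F j) := fun j => hFmeas i j ε
    have hFnn : ∀ j ω, 0 ≤ F j ω := fun j ω => le_trans zero_le_one (hF1 i j ε hε ω)
    -- step 1: pointwise
    have step1 : ∀ ω, (S i ω / (44 * ε)) ^ p ≤ ∏ j, F j ω := by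
      intro ω
      have hsum : S i ω / (44 * ε) = ∑ j, X (i, j) ω / 44 / ε := by
        rw [hSdef]
        simp only []
        rw [Finset.sum_div]
        refine Finset.sum_congr rfl fun j _ => ?_
        rw [div_div]
      have h1 : S i ω / (44 * ε) ≤ 1 + ∑ j, X (i, j) ω / 44 / ε := by
        rw [hsum]; linarith
      have h2 : 1 + ∑ j, X (i, j) ω / 44 / ε ≤ ∏ j, (1 + X (i, j) ω / 44 / ε) :=
        one_add_sum_le_prod _ _ (fun j _ => by
          have := hX0 (i, j) ω
          positivity)
      have h0 : 0 ≤ S i ω / (44 * ε) := by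
        have := hS0 i ω
        positivity
      calc (S i ω / (44 * ε)) ^ p
          ≤ (∏ j, (1 + X (i, j) ω / 44 / ε)) ^ p :=
            Real.rpow_le_rpow h0 (le_trans h1 h2) hp0.le
        _ = ∏ j, F j ω :=
            (Real.finset_prod_rpow Finset.univ (fun j => 1 + X (i, j) ω / 44 / ε)
              (fun j _ => by
                have := hX0 (i, j) ω
                positivity) p).symm
    -- independence
    have hrow : iIndepFun
        (fun j : Fin n => X (i, j)) μ :=
      iIndepFun_precomp (φ := fun j : Fin n => ((i, j) : Fin m × Fin n))
        (fun a b hab => by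
          have := congrArg Prod.snd hab
          simpa using this) hXindep
    have hFindep : iIndepFun F μ := by
      have := hrow.comp (fun _j => fun x : ℝ => (1 + x / 44 / ε) ^ p)
        (fun _j => (Real.continuous_rpow_const hp0.le).measurable.comp
          (measurable_const.add ((measurable_id.div_const 44).div_const ε)))
      exact this
    have step3 : ∫ ω, ∏ j, F j ω ∂μ = ∏ j, ∫ ω, F j ω ∂μ :=
      integral_prod_eq_prod hFm hFnn hFindep Finset.univ
    -- step 2 : ∫ (S/(44ε))^p = B i * v / (44Θ)^p
    have hcc : (1 / (44 * ε) : ℝ) ^ p = v / (44 * Θ) ^ p := by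
      have h44 : (1 / (44 * ε) : ℝ) = v ^ (1 / p) / (44 * Θ) := by
        rw [hεdef]
        field_simp
      rw [h44, Real.div_rpow hvp.le (by positivity)]
      congr 1
      rw [one_div, Real.rpow_inv_rpow hvpos.le hpne]
    have step2 : ∫ ω, (S i ω / (44 * ε)) ^ p ∂μ = B i * v / (44 * Θ) ^ p := by
      have hpt : ∀ ω, (S i ω / (44 * ε)) ^ p = S i ω ^ p * (v / (44 * Θ) ^ p) := by
        intro ω
        rw [div_eq_mul_one_div (S i ω), Real.mul_rpow (hS0 i ω) (by positivity), hcc]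
      simp_rw [hpt]
      rw [integral_mul_const]
      rw [hBdef]
      ring
    -- integrability for step 4
    have hint1 : Integrable (fun ω => (S i ω / (44 * ε)) ^ p) μ := by
      refine Integrable.mono' (integrable_const ((n * Θ / (44 * ε)) ^ p))
        (((Real.continuous_rpow_const hp0.le).measurable.comp
          ((hSmeas i).div_const _)).aestronglyMeasurable) (ae_of_all _ fun ω => ?_)
      have h0 : 0 ≤ S i ω / (44 * ε) := by
        have := hS0 i ω
        positivity
      rw [Real.norm_eq_abs, abs_of_nonneg (Real.rpow_nonneg h0 p)]
      refine Real.rpow_le_rpow h0 ?_ hp0.le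
      exact (div_le_div_iff_of_pos_right (by positivity)).mpr (hSle i ω)
    have hint2 : Integrable (fun ω => ∏ j, F j ω) μ := by
      refine Integrable.mono' (integrable_const (((1 + Θ / 44 / ε) ^ p) ^ (n : ℕ)))
        ((Finset.measurable_prod Finset.univ fun j _ => hFm j).aestronglyMeasurable)
        (ae_of_all _ fun ω => ?_)
      have h0 : 0 ≤ ∏ j, F j ω := Finset.prod_nonneg fun j _ => hFnn j ω
      rw [Real.norm_eq_abs, abs_of_nonneg h0]
      calc ∏ j, F j ω ≤ ∏ _j : Fin n, (1 + Θ / 44 / ε) ^ p :=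
            Finset.prod_le_prod (fun j _ => hFnn j ω) (fun j _ => hFle i j ε hε ω)
        _ = ((1 + Θ / 44 / ε) ^ p) ^ (n : ℕ) := by
            rw [Finset.prod_const, Finset.card_univ, Fintype.card_fin]
    have step4 : B i * v / (44 * Θ) ^ p ≤ ∏ j, ∫ ω, F j ω ∂μ := by
      rw [← step3, ← step2]
      exact integral_mono hint1 hint2 step1
    have hargpos : 0 < B i * v / (44 * Θ) ^ p := by positivity
    have hlog : Real.log (B i * v / (44 * Θ) ^ p)
        ≤ Real.log (∏ j, ∫ ω, F j ω ∂μ) := Real.log_le_log hargpos step4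
    rw [Real.log_prod (fun j _ =>
      ne_of_gt (lt_of_lt_of_le one_pos (hIF1 i j ε hε)))] at hlog
    have hnusum : p * ∑ j, nu μ p ε (fun ω => X (i, j) ω / 44)
        = ∑ j, Real.log (∫ ω, F j ω ∂μ) := by
      rw [Finset.mul_sum]
      refine Finset.sum_congr rfl fun j _ => ?_
      show p * ((1 / p) * Real.log (∫ ω, (1 + X (i, j) ω / 44 / ε) ^ p ∂μ)) = _
      rw [← mul_assoc, mul_one_div, div_self hpne, one_mul]
    rw [hnusum]
    exact hlog
  -- the value (1/1)^p
  have hvone : ((1:ℝ) / 1) ^ p = 1 := by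
    rw [div_self (one_ne_zero), Real.one_rpow]
  set T : ℝ := (44 * Θ) ^ p * Real.exp (4 * p) with hTdef
  have hTpos : 0 < T := by positivity
  have hβpos : (0:ℝ) < (44 * Θ) ^ p := by positivity
  -- Step I : uniform bound
  have hBle : ∀ i, B i ≤ T := by
    intro i
    rcases le_or_gt (B i) 0 with hB | hBpos
    · exact le_trans hB hTpos.le
    have hstep : ∀ R : ℝ, 1 ≤ R →
        Real.log (B i * 1 / (44 * Θ) ^ p) ≤ 4 * p + p * (m : ℝ) / R := by
      intro R hR
      have hRpos : (0:ℝ) < R := lt_of_lt_of_le one_pos hR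
      set v : Fin m → ℝ := fun k => if k = i then 1 else R with hvdef
      have hv : ∀ k, ((1:ℝ) / 1) ^ p ≤ v k := by
        intro k
        rw [hvone]
        by_cases h : k = i <;> simp [hvdef, h, hR]
      set f : Fin m → ℝ := fun k => (1 / v k) *
        ((∑ j, nu μ p (Θ / v k ^ (1 / p)) fun ω => X (k, j) ω / 44) - 1) with hfdef
      have hsum : ∑ k, f k ≤ 3 := hnu v hv
      have hterm : ∀ k ∈ Finset.univ.erase i, -(1 / R) ≤ f k := by
        intro k hk
        have hki : k ≠ i := Finset.ne_of_mem_erase hk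
        have hvk : v k = R := by simp [hvdef, hki]
        have hL : 0 ≤ ∑ j, nu μ p (Θ / R ^ (1 / p)) fun ω => X (k, j) ω / 44 :=
          Finset.sum_nonneg fun j _ => hnu_nonneg k j _ (hεpos R hR)
        have h1R : (0:ℝ) ≤ 1 / R := by positivity
        have hmul := mul_le_mul_of_nonneg_left
          (by linarith :
            (-1:ℝ) ≤ (∑ j, nu μ p (Θ / R ^ (1 / p)) fun ω => X (k, j) ω / 44) - 1) h1R
        have hfk : f k = (1 / R) *
            ((∑ j, nu μ p (Θ / R ^ (1 / p)) fun ω => X (k, j) ω / 44) - 1) := by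
          rw [hfdef]
          simp only [hvk]
        rw [hfk]
        calc -(1 / R) = (1 / R) * (-1) := by ring
          _ ≤ _ := hmul
      have hsplit := Finset.add_sum_erase Finset.univ f (Finset.mem_univ i)
      have hcard : ((Finset.univ.erase i).card : ℝ) ≤ (m : ℝ) := by
        have : (Finset.univ.erase i).card ≤ (Finset.univ : Finset (Fin m)).card :=
          Finset.card_le_card (Finset.erase_subset _ _)
        have hm : (Finset.univ : Finset (Fin m)).card = m := by
          rw [Finset.card_univ, Fintype.card_fin]
        exact_mod_cast hm ▸ this
      have h2 : -((m : ℝ) * (1 / R)) ≤ ∑ k ∈ Finset.univ.erase i, f k := by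
        have hge : ∑ k ∈ Finset.univ.erase i, (-(1 / R) : ℝ)
            ≤ ∑ k ∈ Finset.univ.erase i, f k := Finset.sum_le_sum hterm
        have hc : ∑ _k ∈ Finset.univ.erase i, (-(1 / R) : ℝ)
            = -(((Finset.univ.erase i).card : ℝ) * (1 / R)) := by
          rw [Finset.sum_const, nsmul_eq_mul]
          ring
        rw [hc] at hge
        have h1R : (0:ℝ) ≤ 1 / R := by positivity
        nlinarith
      have hfi : f i ≤ 3 + (m : ℝ) * (1 / R) := by linarith
      have hvi : v i = 1 := by simp [hvdef]
      have hfi2 : (∑ j, nu μ p (Θ / (1:ℝ) ^ (1 / p)) fun ω => X (i, j) ω / 44) - 1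
          ≤ 3 + (m : ℝ) * (1 / R) := by
        have hfival : f i = (∑ j, nu μ p (Θ / (1:ℝ) ^ (1 / p)) fun ω => X (i, j) ω / 44) - 1 := by
          rw [hfdef]
          simp only [hvi]
          ring
        rw [hfival] at hfi
        exact hfi
      have hkey := key i 1 le_rfl hBpos
      calc Real.log (B i * 1 / (44 * Θ) ^ p)
          ≤ p * ∑ j, nu μ p (Θ / (1:ℝ) ^ (1 / p)) fun ω => X (i, j) ω / 44 := hkey
        _ ≤ p * (4 + (m : ℝ) * (1 / R)) := by
            have : (∑ j, nu μ p (Θ / (1:ℝ) ^ (1 / p)) fun ω => X (i, j) ω / 44)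
                ≤ 4 + (m : ℝ) * (1 / R) := by linarith
            exact mul_le_mul_of_nonneg_left this hp0.le
        _ = 4 * p + p * (m : ℝ) / R := by ring
    have hlog := forall_le_add_div (z := p * (m : ℝ)) (by positivity) hstep
    rw [mul_one] at hlog
    have hexp := (Real.log_le_iff_le_exp (by positivity)).mp hlog
    rw [div_le_iff₀ hβpos] at hexp
    rw [hTdef]
    linarith [hexp, mul_comm (Real.exp (4 * p)) ((44 * Θ) ^ p)]
  -- Step II : sum bound
  have hBsum : ∑ i, B i ≤ T := by
    have hstep : ∀ R : ℝ, 1 ≤ R → (3 / T) * ∑ i, B i ≤ 3 + (m : ℝ) / R := by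
      intro R hR
      have hRpos : (0:ℝ) < R := lt_of_lt_of_le one_pos hR
      set v : Fin m → ℝ := fun k => if B k ≤ 0 then R else T / B k with hvdef
      have hv : ∀ k, ((1:ℝ) / 1) ^ p ≤ v k := by
        intro k
        rw [hvone]
        by_cases h : B k ≤ 0
        · simp [hvdef, h, hR]
        · push_neg at h
          simp only [hvdef, if_neg (not_le.mpr h)]
          exact (one_le_div h).mpr (hBle k)
      set f : Fin m → ℝ := fun k => (1 / v k) *
        ((∑ j, nu μ p (Θ / v k ^ (1 / p)) fun ω => X (k, j) ω / 44) - 1) with hfdef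
      have hsum : ∑ k, f k ≤ 3 := hnu v hv
      have hterm : ∀ k ∈ Finset.univ, 3 * B k / T - 1 / R ≤ f k := by
        intro k _
        by_cases h : B k ≤ 0
        · have hBk : B k = 0 := le_antisymm h (hB0 k)
          have hvk : v k = R := by simp [hvdef, h]
          have hL : 0 ≤ ∑ j, nu μ p (Θ / R ^ (1 / p)) fun ω => X (k, j) ω / 44 :=
            Finset.sum_nonneg fun j _ => hnu_nonneg k j _ (hεpos R hR)
          have h1R : (0:ℝ) ≤ 1 / R := by positivity
          have hfk : f k = (1 / R) *
              ((∑ j, nu μ p (Θ / R ^ (1 / p)) fun ω => X (k, j) ω / 44) - 1) := by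
            rw [hfdef]
            simp only [hvk]
          rw [hfk, hBk]
          have hmul := mul_le_mul_of_nonneg_left
            (by linarith :
              (-1:ℝ) ≤ (∑ j, nu μ p (Θ / R ^ (1 / p)) fun ω => X (k, j) ω / 44) - 1) h1R
          calc 3 * 0 / T - 1 / R = (1 / R) * (-1) := by ring
            _ ≤ _ := hmul
        · push_neg at h
          have hvk : v k = T / B k := by simp [hvdef, not_le.mpr h]
          have hv1 : (1:ℝ) ≤ T / B k := (one_le_div h).mpr (hBle k)
          have harg : B k * (T / B k) / (44 * Θ) ^ p = Real.exp (4 * p) := by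
            rw [hTdef]
            field_simp
          have hL4 : 4 ≤ ∑ j, nu μ p (Θ / (T / B k) ^ (1 / p)) fun ω => X (k, j) ω / 44 := by
            have hk := key k (T / B k) hv1 h
            rw [harg, Real.log_exp] at hk
            have := (mul_le_mul_iff_right₀ hp0).mp (by linarith : p * 4 ≤ p *
              ∑ j, nu μ p (Θ / (T / B k) ^ (1 / p)) fun ω => X (k, j) ω / 44)
            linarith
          have hfk : f k = (B k / T) *
              ((∑ j, nu μ p (Θ / (T / B k) ^ (1 / p)) fun ω => X (k, j) ω / 44) - 1) := by
            rw [hfdef]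
            simp only [hvk]
            rw [one_div_div]
          rw [hfk]
          have hBT : (0:ℝ) ≤ B k / T := by positivity
          have hmul : (B k / T) * 3 ≤ (B k / T) *
              ((∑ j, nu μ p (Θ / (T / B k) ^ (1 / p)) fun ω => X (k, j) ω / 44) - 1) :=
            mul_le_mul_of_nonneg_left (by linarith) hBT
          have h1R : (0:ℝ) ≤ 1 / R := by positivity
          calc 3 * B k / T - 1 / R ≤ 3 * B k / T := by linarith
            _ = (B k / T) * 3 := by ring
            _ ≤ _ := hmul
      have hsumle := Finset.sum_le_sum hterm
      have hcalc : ∑ k, (3 * B k / T - 1 / R) = (3 / T) * ∑ i, B i - (m : ℝ) / R := by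
        rw [Finset.sum_sub_distrib]
        congr 1
        · rw [Finset.mul_sum]
          refine Finset.sum_congr rfl fun k _ => ?_
          ring
        · rw [Finset.sum_const, Finset.card_univ, Fintype.card_fin, nsmul_eq_mul]
          ring
      rw [hcalc] at hsumle
      linarith
    have hfin := forall_le_add_div (z := (m : ℝ)) (Nat.cast_nonneg m) hstep
    have h3 : 3 * (∑ i, B i) ≤ 3 * T := by
      rw [div_mul_eq_mul_div, div_le_iff₀ hTpos] at hfin
      linarith
    linarith
  -- Step III : conclusion
  have hp_inv_le : 1 / p ≤ 1 := by
    rw [div_le_one hp0]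
    exact hp.le
  have hpinv0 : (0:ℝ) ≤ 1 / p := by positivity
  have hfmeas : Measurable (fun ω => ∑ i, S i ω ^ p) :=
    Finset.measurable_sum _ fun i _ => hSpmeas i
  have hfnn : ∀ ω, 0 ≤ ∑ i, S i ω ^ p := fun ω =>
    Finset.sum_nonneg fun i _ => Real.rpow_nonneg (hS0 i ω) p
  have hfint : Integrable (fun ω => ∑ i, S i ω ^ p) μ := by
    have := integrable_finset_sum (μ := μ) Finset.univ
      (f := fun (i : Fin m) ω => S i ω ^ p) (fun i _ => hSpint i)
    convert this using 1
  have hGpt : ∀ ω, (∑ i, S i ω ^ p) ^ (1 / p)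
      ≤ T ^ (1 / p) * ((1 / p) * ((∑ i, S i ω ^ p) / T) + (1 - 1 / p)) := by
    intro ω
    have hdiv0 : 0 ≤ (∑ i, S i ω ^ p) / T := div_nonneg (hfnn ω) hTpos.le
    have h1 : (∑ i, S i ω ^ p) ^ (1 / p)
        = T ^ (1 / p) * ((∑ i, S i ω ^ p) / T) ^ (1 / p) := by
      rw [← Real.mul_rpow hTpos.le hdiv0, mul_comm T, div_mul_cancel₀ _ hTpos.ne']
    rw [h1]
    have h2 : ((∑ i, S i ω ^ p) / T) ^ (1 / p)
        ≤ (1 / p) * ((∑ i, S i ω ^ p) / T) + (1 - 1 / p) := by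
      have hg := Real.geom_mean_le_arith_mean2_weighted
        (w₁ := 1 / p) (w₂ := 1 - 1 / p) (p₁ := (∑ i, S i ω ^ p) / T) (p₂ := 1)
        hpinv0 (by linarith) hdiv0 zero_le_one (by ring)
      rw [Real.one_rpow, mul_one, mul_one] at hg
      exact hg
    exact mul_le_mul_of_nonneg_left h2 (Real.rpow_nonneg hTpos.le _)
  have hGmeas : Measurable (fun ω => (∑ i, S i ω ^ p) ^ (1 / p)) :=
    (Real.continuous_rpow_const hpinv0).measurable.comp hfmeas
  have hGint : Integrable (fun ω => (∑ i, S i ω ^ p) ^ (1 / p)) μ := by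
    refine Integrable.mono' (integrable_const (((m : ℝ) * (n * Θ) ^ p) ^ (1 / p)))
      hGmeas.aestronglyMeasurable (ae_of_all _ fun ω => ?_)
    rw [Real.norm_eq_abs, abs_of_nonneg (Real.rpow_nonneg (hfnn ω) _)]
    refine Real.rpow_le_rpow (hfnn ω) ?_ hpinv0
    calc ∑ i, S i ω ^ p ≤ ∑ _i : Fin m, (n * Θ) ^ p :=
          Finset.sum_le_sum fun i _ =>
            Real.rpow_le_rpow (hS0 i ω) (hSle i ω) hp0.le
      _ = (m : ℝ) * (n * Θ) ^ p := by
          rw [Finset.sum_const, Finset.card_univ, Fintype.card_fin, nsmul_eq_mul]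
  have hRHSint : Integrable
      (fun ω => T ^ (1 / p) * ((1 / p) * ((∑ i, S i ω ^ p) / T) + (1 - 1 / p))) μ := by
    apply Integrable.const_mul
    exact ((hfint.div_const T).const_mul (1 / p)).add (integrable_const _)
  have hIB : ∫ ω, ∑ i, S i ω ^ p ∂μ = ∑ i, B i := by
    rw [integral_finset_sum Finset.univ (fun i _ => hSpint i)]
  have hfinal : ∫ ω, (∑ i, S i ω ^ p) ^ (1 / p) ∂μ
      ≤ T ^ (1 / p) * ((1 / p) * ((∑ i, B i) / T) + (1 - 1 / p)) := by
    calc ∫ ω, (∑ i, S i ω ^ p) ^ (1 / p) ∂μ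
        ≤ ∫ ω, T ^ (1 / p) * ((1 / p) * ((∑ i, S i ω ^ p) / T) + (1 - 1 / p)) ∂μ :=
          integral_mono hGint hRHSint hGpt
      _ = T ^ (1 / p) * ((1 / p) * ((∑ i, B i) / T) + (1 - 1 / p)) := by
          rw [integral_const_mul]
          congr 1
          rw [integral_add (((hfint.div_const T).const_mul (1 / p))) (integrable_const _)]
          rw [integral_const]
          simp only [probReal_univ, smul_eq_mul, one_mul]
          congr 1
          rw [integral_const_mul, integral_div, hIB]
  have hT14 : T ^ (1 / p) = 44 * Θ * Real.exp 4 := by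
    rw [hTdef, Real.mul_rpow (by positivity) (Real.exp_nonneg _)]
    congr 1
    · rw [one_div, Real.rpow_rpow_inv (by positivity) hpne]
    · rw [← Real.exp_mul]
      congr 1
      field_simp
  have hmono : (1 / p) * ((∑ i, B i) / T) + (1 - 1 / p) ≤ 1 := by
    have h1 : (∑ i, B i) / T ≤ 1 := (div_le_one hTpos).mpr hBsum
    nlinarith
  calc ∫ ω, (∑ i, (∑ j, X (i, j) ω) ^ p) ^ (1 / p) ∂μ
      = ∫ ω, (∑ i, S i ω ^ p) ^ (1 / p) ∂μ := rfl
    _ ≤ T ^ (1 / p) * ((1 / p) * ((∑ i, B i) / T) + (1 - 1 / p)) := hfinal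
    _ ≤ T ^ (1 / p) * 1 := mul_le_mul_of_nonneg_left hmono (Real.rpow_nonneg hTpos.le _)
    _ = 44 * Real.exp 4 * Θ := by
        rw [mul_one, hT14]
        ring
end

section
/- Let p ≥ 1, ε > 0, and let X be a nonnegative random variable with E X^p < ∞. If ν_{ε,p}(X) ≥ 1, then ν_{ε,p}(X) ≤ (11^p / ε^p) · E X^p. -/
open MeasureTheory ProbabilityTheory

lemma helper_pow_bound {p : ℝ} (hp : 1 ≤ p) {y : ℝ} (hy : 0 ≤ y) :
    (1 + y) ^ p ≤ 2 ^ p * (1 + y ^ p) := by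
  have hp0 : 0 ≤ p := le_trans zero_le_one hp
  have h1 : (1 + y : ℝ) ≤ 2 * max 1 y := by
    rcases le_total y 1 with h | h
    · simp [max_eq_left h]; linarith
    · simp [max_eq_right h]; linarith
  have h2 : (1 + y) ^ p ≤ (2 * max 1 y) ^ p :=
    Real.rpow_le_rpow (by linarith) h1 hp0
  have h3 : (2 * max 1 y : ℝ) ^ p = 2 ^ p * (max 1 y) ^ p :=
    Real.mul_rpow (by norm_num) (le_max_of_le_left zero_le_one)
  have h4 : (max 1 y : ℝ) ^ p ≤ 1 + y ^ p := by
    rcases le_total y 1 with h | h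
    · rw [max_eq_left h, Real.one_rpow]
      have := Real.rpow_nonneg hy p; linarith
    · rw [max_eq_right h]
      have : (0:ℝ) ≤ y ^ p := Real.rpow_nonneg hy p
      linarith
  calc (1 + y) ^ p ≤ 2 ^ p * (max 1 y) ^ p := by rw [← h3]; exact h2
    _ ≤ 2 ^ p * (1 + y ^ p) := by
        have : (0:ℝ) ≤ 2 ^ p := Real.rpow_nonneg (by norm_num) p
        nlinarith

theorem stmt_11 {Ω : Type*} [MeasurableSpace Ω] (μ : Measure Ω) [IsProbabilityMeasure μ]
    (p ε : ℝ) (hp : 1 ≤ p) (hε : 0 < ε) (X : Ω → ℝ)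
    (hmeas : Measurable X) (hnn : ∀ ω, 0 ≤ X ω)
    (hint : Integrable (fun ω => X ω ^ p) μ)
    (hnu : 1 ≤ nu μ p ε X) :
    nu μ p ε X ≤ (11 ^ p / ε ^ p) * ∫ ω, X ω ^ p ∂μ := by
  have hp0 : 0 < p := lt_of_lt_of_le one_pos hp
  have hεp : (0:ℝ) < ε ^ p := Real.rpow_pos_of_pos hε p
  set J := ∫ ω, X ω ^ p ∂μ with hJ
  have hJ0 : 0 ≤ J := integral_nonneg fun ω => Real.rpow_nonneg (hnn ω) p
  set M := J / ε ^ p with hM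
  have hM0 : 0 ≤ M := div_nonneg hJ0 hεp.le
  set I := ∫ ω, (1 + X ω / ε) ^ p ∂μ with hI
  -- pointwise bound
  have hpt : ∀ ω, (1 + X ω / ε) ^ p ≤ 2 ^ p * (1 + X ω ^ p / ε ^ p) := by
    intro ω
    have hy : 0 ≤ X ω / ε := div_nonneg (hnn ω) hε.le
    have := helper_pow_bound hp hy
    rwa [Real.div_rpow (hnn ω) hε.le] at this
  -- integrability
  have hg : Integrable (fun ω => 2 ^ p * (1 + X ω ^ p / ε ^ p)) μ := by
    apply Integrable.const_mul
    exact (integrable_const 1).add (hint.div_const _)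
  have hf : Integrable (fun ω => (1 + X ω / ε) ^ p) μ := by
    apply Integrable.mono' hg
    · exact ((Real.continuous_rpow_const (le_trans zero_le_one hp)).measurable.comp
        ((hmeas.div_const ε).const_add 1)).aestronglyMeasurable
    · filter_upwards with ω
      rw [Real.norm_of_nonneg (Real.rpow_nonneg (by have := hnn ω; positivity) p)]
      exact hpt ω
  have hI1 : 1 ≤ I := by
    have h := integral_mono (μ := μ) (integrable_const (1:ℝ)) hf (fun ω =>
      Real.one_le_rpow (by nlinarith [div_nonneg (hnn ω) hε.le]) hp0.le)
    simpa using h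
  have hI0 : 0 < I := lt_of_lt_of_le one_pos hI1
  -- integral bound
  have hIle : I ≤ 2 ^ p * (1 + M) := by
    have : I ≤ ∫ ω, 2 ^ p * (1 + X ω ^ p / ε ^ p) ∂μ := integral_mono hf hg hpt
    calc I ≤ ∫ ω, 2 ^ p * (1 + X ω ^ p / ε ^ p) ∂μ := this
      _ = 2 ^ p * (1 + M) := by
          rw [integral_const_mul]
          congr 1
          rw [integral_add (integrable_const 1) (hint.div_const _)]
          simp [integral_div, hM, hJ]
  -- from hnu: exp p ≤ I
  have hlogI : p ≤ Real.log I := by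
    have : 1 ≤ (1/p) * Real.log I := hnu
    calc p = p * 1 := (mul_one p).symm
      _ ≤ p * ((1/p) * Real.log I) := by
          exact mul_le_mul_of_nonneg_left this hp0.le
      _ = Real.log I := by field_simp
  have hexpI : Real.exp p ≤ I := by
    rwa [← Real.le_log_iff_exp_le hI0]
  -- M ≥ e/2 - 1
  have h2p : (0:ℝ) < (2:ℝ) ^ p := Real.rpow_pos_of_pos two_pos p
  have hMlow : Real.exp 1 / 2 - 1 ≤ M := by
    have h1 : Real.exp p ≤ 2 ^ p * (1 + M) := le_trans hexpI hIle
    have h2 : (Real.exp 1 / 2) ^ p ≤ 1 + M := by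
      rw [Real.div_rpow (Real.exp_pos 1).le (by norm_num), Real.exp_one_rpow]
      rw [div_le_iff₀ h2p]
      linarith [h1, mul_comm ((2:ℝ)^p) (1+M)]
    have h3 : Real.exp 1 / 2 ≤ (Real.exp 1 / 2) ^ p := by
      have he : (1:ℝ) ≤ Real.exp 1 / 2 := by
        have := Real.exp_one_gt_d9; norm_num; linarith
      calc Real.exp 1 / 2 = (Real.exp 1 / 2) ^ (1:ℝ) := (Real.rpow_one _).symm
        _ ≤ (Real.exp 1 / 2) ^ p := Real.rpow_le_rpow_of_exponent_le he hp
    linarith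
  -- nu ≤ log 2 + M
  have hnuU : nu μ p ε X ≤ Real.log 2 + M := by
    have hlog2 : Real.log I ≤ p * Real.log 2 + Real.log (1 + M) := by
      calc Real.log I ≤ Real.log (2 ^ p * (1 + M)) :=
            Real.log_le_log hI0 hIle
        _ = p * Real.log 2 + Real.log (1 + M) := by
            rw [Real.log_mul (ne_of_gt h2p) (by linarith), Real.log_rpow two_pos]
    have hlogM : Real.log (1 + M) ≤ M := by
      have := Real.log_le_sub_one_of_pos (show (0:ℝ) < 1 + M by linarith)
      linarith
    have : nu μ p ε X = (1/p) * Real.log I := rfl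
    rw [this]
    calc (1/p) * Real.log I ≤ (1/p) * (p * Real.log 2 + Real.log (1 + M)) := by
          apply mul_le_mul_of_nonneg_left hlog2 (by positivity)
      _ = Real.log 2 + (1/p) * Real.log (1 + M) := by field_simp
      _ ≤ Real.log 2 + Real.log (1 + M) := by
          have hl : 0 ≤ Real.log (1 + M) := Real.log_nonneg (by linarith)
          have : (1/p) * Real.log (1+M) ≤ 1 * Real.log (1+M) := by
            apply mul_le_mul_of_nonneg_right _ hl
            rw [div_le_one hp0]; exact hp
          linarith
      _ ≤ Real.log 2 + M := by linarith
  -- finish: log 2 + M ≤ 11 M ≤ 11^p M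
  have h11 : (11:ℝ) ≤ (11:ℝ) ^ p := by
    calc (11:ℝ) = (11:ℝ) ^ (1:ℝ) := (Real.rpow_one _).symm
      _ ≤ (11:ℝ) ^ p := Real.rpow_le_rpow_of_exponent_le (by norm_num) hp
  have hkey : Real.log 2 + M ≤ 11 * M := by
    have hlog2v : Real.log 2 < 0.6931471808 := Real.log_two_lt_d9
    have hev : (2.7182818283:ℝ) < Real.exp 1 := Real.exp_one_gt_d9
    nlinarith
  have hfin : (11:ℝ) * M ≤ 11 ^ p * M := mul_le_mul_of_nonneg_right h11 hM0
  calc nu μ p ε X ≤ Real.log 2 + M := hnuU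
    _ ≤ 11 * M := hkey
    _ ≤ 11 ^ p * M := hfin
    _ = (11 ^ p / ε ^ p) * J := by rw [hM]; field_simp
end

section
/- For every constant γ > 0 there exists a constant C > 0 (depending only on γ) such that the following holds for every scalar Θ > 0: let {X_{i,j}}_{i ∈ [m], j ∈ [n]} be independent nonnegative random variables and let S_i := Σ_j X_{i,j}. Suppose there is a sequence ℓ_1, …, ℓ_m of integers in {1, …, m} such that Σ_j β_{ℓ_i}(X_{i,j}/Θ) ≤ γ for all i, and for each ℓ ∈ {1, …, m} at most ℓ of the indices i have ℓ_i = ℓ. Then E max_{1 ≤ i ≤ m} S_i ≤ C·Θ. -/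
open MeasureTheory ProbabilityTheory

/-- The effective size `β_ℓ(X) = (1/ln ℓ) · ln E e^{X ln ℓ}` for `ℓ > 1`, and `β_1(X) = E X`. -/
noncomputable def effSize {Ω : Type*} [MeasurableSpace Ω] (μ : Measure Ω) (ℓ : ℝ) (X : Ω → ℝ) :
    ℝ :=
  if 1 < ℓ then (1 / Real.log ℓ) * Real.log (∫ ω, Real.exp (X ω * Real.log ℓ) ∂μ)
  else ∫ ω, X ω ∂μ


lemma aux_maxle {lam x : ℝ} (hlam : 0 < lam) :
    max x 0 ≤ Real.exp (lam * x) / (lam * Real.exp 1) := by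
  have hpos : 0 < lam * Real.exp 1 := by positivity
  rw [le_div_iff₀ hpos]
  rcases le_or_gt x 0 with hx | hx
  · rw [max_eq_right hx, zero_mul]
    positivity
  · rw [max_eq_left hx.le]
    have h1 : lam * x ≤ Real.exp (lam * x - 1) := by
      have := Real.add_one_le_exp (lam * x - 1)
      linarith
    calc x * (lam * Real.exp 1) = (lam * x) * Real.exp 1 := by ring
      _ ≤ Real.exp (lam * x - 1) * Real.exp 1 :=
          mul_le_mul_of_nonneg_right h1 (Real.exp_pos 1).le
      _ = Real.exp (lam * x) := by rw [← Real.exp_add]; congr 1; ring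

lemma aux_sumsq (m : ℕ) : ∑ l ∈ Finset.Icc 2 m, ((l : ℝ)⁻¹) ^ 2 ≤ 1 := by
  have key : ∀ m : ℕ, 1 ≤ m → ∑ l ∈ Finset.Icc 2 m, ((l : ℝ)⁻¹) ^ 2 ≤ 1 - (m : ℝ)⁻¹ := by
    intro m hm
    induction m with
    | zero => omega
    | succ k ih =>
      rcases Nat.lt_or_ge k 1 with hk | hk
      · interval_cases k
        simp
      · rw [Finset.sum_Icc_succ_top (by omega)]
        have h1 := ih hk
        have hk0 : (1:ℝ) ≤ (k:ℝ) := by exact_mod_cast hk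
        have h2 : (((k:ℕ)+1 : ℕ) : ℝ)⁻¹ ^ 2 ≤ (k : ℝ)⁻¹ - ((k:ℝ)+1)⁻¹ := by
          push_cast
          have e : (k:ℝ)⁻¹ - ((k:ℝ)+1)⁻¹ = ((k:ℝ)*((k:ℝ)+1))⁻¹ := by
            rw [inv_sub_inv (by positivity) (by positivity)]
            ring_nf
          rw [e, inv_pow]
          exact inv_anti₀ (by positivity) (by nlinarith)
        push_cast at *
        linarith
  rcases Nat.lt_or_ge m 1 with hm | hm
  · interval_cases m
    simp
  · have := key m hm
    have : (0:ℝ) < m := by exact_mod_cast hm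
    have h := key m hm
    nlinarith [inv_pos.mpr this]

lemma iIndepFun_precomp {Ω ι κ β : Type*} [MeasurableSpace Ω] {μ : Measure Ω}
    [IsProbabilityMeasure μ] [MeasurableSpace β] {f : ι → Ω → β}
    (hf : iIndepFun f μ) (g : κ → ι)
    (hg : Function.Injective g) :
    iIndepFun (fun k => f (g k)) μ := by
  rw [iIndepFun_iff_measure_inter_preimage_eq_mul] at hf ⊢
  intro S sets hsets
  rcases S.eq_empty_or_nonempty with rfl | ⟨k0, hk0⟩
  · simp
  · haveI : Nonempty κ := ⟨k0⟩
    classical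
    have hinv : ∀ k, Function.invFun g (g k) = k := Function.leftInverse_invFun hg
    have h := hf (S.image g) (sets := fun i => sets (Function.invFun g i)) ?_
    · rw [Finset.set_biInter_finset_image] at h
      rw [Finset.prod_image (fun a _ b _ hab => hg hab)] at h
      simpa [hinv] using h
    · intro i hi
      obtain ⟨k, hk, rfl⟩ := Finset.mem_image.mp hi
      simp only [hinv]
      exact hsets k hk

lemma key_i {Ω : Type*} [MeasurableSpace Ω] (μ : Measure Ω) [IsProbabilityMeasure μ]
    {n : ℕ} (Z : Fin n → Ω → ℝ) (hmeas : ∀ j, Measurable (Z j))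
    (hindep : iIndepFun Z μ)
    {l : ℝ} (hl : 2 ≤ l)
    (hint : ∀ j, Integrable (fun ω => Real.exp (Z j ω * Real.log l)) μ)
    {γ : ℝ}
    (heff : ∑ j, (1 / Real.log l) * Real.log (∫ ω, Real.exp (Z j ω * Real.log l) ∂μ) ≤ γ) :
    ∫ ω, max ((∑ j, Z j ω) - (γ + 3)) 0 ∂μ ≤ (l⁻¹) ^ 3 := by
  set lam := Real.log l with hlamdef
  have hl1 : (1:ℝ) < l := by linarith
  have hlam2 : Real.log 2 ≤ lam := Real.log_le_log (by norm_num) hl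
  have hlam0 : 0 < lam := Real.log_pos hl1
  have hint' : ∀ j, Integrable (fun ω => Real.exp (lam * Z j ω)) μ := by
    intro j; simpa [mul_comm] using hint j
  have hZsum_int : Integrable (fun ω => Real.exp (lam * (∑ j, Z j) ω)) μ :=
    hindep.integrable_exp_mul_sum hmeas (fun j _ => hint' j)
  have hmgf : mgf (∑ j, Z j) μ lam ≤ Real.exp (lam * γ) := by
    rw [hindep.mgf_sum hmeas]
    have hmj : ∀ j, mgf (Z j) μ lam
        = Real.exp (lam * ((1 / lam) * Real.log (∫ ω, Real.exp (Z j ω * lam) ∂μ))) := by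
      intro j
      have hmeq : (∫ ω, Real.exp (Z j ω * lam) ∂μ) = mgf (Z j) μ lam := by
        simp only [mgf, mul_comm]
      rw [← mul_assoc, mul_one_div_cancel hlam0.ne', one_mul, hmeq,
        Real.exp_log (mgf_pos (hint' j))]
    calc ∏ j, mgf (Z j) μ lam
        = Real.exp (∑ j, lam * ((1 / lam) * Real.log (∫ ω, Real.exp (Z j ω * lam) ∂μ))) := by
          rw [Real.exp_sum]; exact Finset.prod_congr rfl fun j _ => hmj j
      _ ≤ Real.exp (lam * γ) := by
          rw [Real.exp_le_exp, ← Finset.mul_sum]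
          exact mul_le_mul_of_nonneg_left heff hlam0.le
  -- rewrite the exponential-of-shift as a product with a constant
  have hfun : (fun ω => Real.exp (lam * ((∑ j, Z j ω) - (γ + 3))) / (lam * Real.exp 1))
      = fun ω => Real.exp (lam * (∑ j, Z j) ω)
          * (Real.exp (-(lam * (γ + 3))) / (lam * Real.exp 1)) := by
    funext ω
    rw [Finset.sum_apply]
    rw [show lam * ((∑ j, Z j ω) - (γ + 3))
        = lam * (∑ j, Z j ω) + -(lam * (γ + 3)) by ring, Real.exp_add]
    ring
  have hmono : ∫ ω, max ((∑ j, Z j ω) - (γ + 3)) 0 ∂μ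
      ≤ ∫ ω, Real.exp (lam * ((∑ j, Z j ω) - (γ + 3))) / (lam * Real.exp 1) ∂μ := by
    apply integral_mono_of_nonneg
    · filter_upwards with ω using le_max_right _ _
    · rw [hfun]; exact hZsum_int.mul_const _
    · filter_upwards with ω using aux_maxle hlam0
  have hval : ∫ ω, Real.exp (lam * ((∑ j, Z j ω) - (γ + 3))) / (lam * Real.exp 1) ∂μ
      = mgf (∑ j, Z j) μ lam * (Real.exp (-(lam * (γ + 3))) / (lam * Real.exp 1)) := by
    rw [hfun, integral_mul_const]
    rfl
  have hbound : mgf (∑ j, Z j) μ lam * (Real.exp (-(lam * (γ + 3))) / (lam * Real.exp 1))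
      ≤ (l⁻¹) ^ 3 := by
    have hc : 0 < Real.exp (-(lam * (γ + 3))) / (lam * Real.exp 1) := by positivity
    have h1 : mgf (∑ j, Z j) μ lam * (Real.exp (-(lam * (γ + 3))) / (lam * Real.exp 1))
        ≤ Real.exp (lam * γ) * (Real.exp (-(lam * (γ + 3))) / (lam * Real.exp 1)) :=
      mul_le_mul_of_nonneg_right hmgf hc.le
    have h2 : Real.exp (lam * γ) * Real.exp (-(lam * (γ + 3))) = Real.exp (-(3 * lam)) := by
      rw [← Real.exp_add]; congr 1; ring
    have h3 : Real.exp (-(3 * lam)) = (l⁻¹) ^ 3 := by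
      rw [show -(3 * lam) = (3:ℕ) * (-lam) by push_cast; ring, Real.exp_nat_mul,
        Real.exp_neg, hlamdef, Real.exp_log (by linarith)]
    have h4 : (1:ℝ) ≤ lam * Real.exp 1 := by
      nlinarith [Real.exp_one_gt_d9, Real.log_two_gt_d9]
    calc mgf (∑ j, Z j) μ lam * (Real.exp (-(lam * (γ + 3))) / (lam * Real.exp 1))
        ≤ Real.exp (lam * γ) * (Real.exp (-(lam * (γ + 3))) / (lam * Real.exp 1)) := h1
      _ = Real.exp (-(3 * lam)) / (lam * Real.exp 1) := by rw [← h2]; ring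
      _ ≤ Real.exp (-(3 * lam)) / 1 := by
          apply div_le_div_of_nonneg_left (Real.exp_pos _).le ?_ h4
          · linarith
      _ = (l⁻¹) ^ 3 := by rw [div_one, h3]
  calc ∫ ω, max ((∑ j, Z j ω) - (γ + 3)) 0 ∂μ
      ≤ ∫ ω, Real.exp (lam * ((∑ j, Z j ω) - (γ + 3))) / (lam * Real.exp 1) ∂μ := hmono
    _ = mgf (∑ j, Z j) μ lam * (Real.exp (-(lam * (γ + 3))) / (lam * Real.exp 1)) := hval
    _ ≤ (l⁻¹) ^ 3 := hbound

theorem stmt_12 : ∀ (γ : ℝ), 0 < γ → ∃ C : ℝ, 0 < C ∧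
    ∀ (Θ : ℝ), 0 < Θ →
    ∀ (Ω : Type*) (_ : MeasurableSpace Ω) (μ : Measure Ω), IsProbabilityMeasure μ →
    ∀ (m n : ℕ) (X : Fin m × Fin n → Ω → ℝ),
      (∀ ij, Measurable (X ij)) → (∀ ij ω, 0 ≤ X ij ω) →
      iIndepFun X μ →
      ∀ ℓ : Fin m → ℕ, (∀ i, ℓ i ∈ Finset.Icc 1 m) →
      (∀ ij, Integrable (X ij) μ) →
      (∀ i j, Integrable (fun ω => Real.exp (X (i, j) ω / Θ * Real.log (ℓ i : ℝ))) μ) →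
      (∀ i, ∑ j, effSize μ (ℓ i : ℝ) (fun ω => X (i, j) ω / Θ) ≤ γ) →
      (∀ l ∈ Finset.Icc 1 m, (Finset.univ.filter fun i => ℓ i = l).card ≤ l) →
      ∫ ω, ⨆ i, ∑ j, X (i, j) ω ∂μ ≤ C * Θ := by
  intro γ hγ
  refine ⟨2 * γ + 4, by linarith, ?_⟩
  intro Θ hΘ Ω mΩ μ hprob m n X hXmeas hXnn hindep ℓ hℓ hXint hexp heff hcard
  by_cases hm : m = 0
  · subst hm
    have : (fun ω => ⨆ i : Fin 0, ∑ j, X (i, j) ω) = fun _ => (0:ℝ) := by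
      funext ω
      exact Real.iSup_of_isEmpty _
    rw [this, integral_zero]
    positivity
  have hm1 : 1 ≤ m := Nat.one_le_iff_ne_zero.mpr hm
  haveI : Nonempty (Fin m) := ⟨⟨0, by omega⟩⟩
  classical
  set a : ℝ := γ + 3 with ha
  set T : Fin m → Ω → ℝ := fun i ω =>
    if ℓ i = 1 then ∑ j, X (i, j) ω else Θ * max ((∑ j, X (i, j) ω / Θ) - a) 0 with hT
  -- key bound for rows with ℓ i ≥ 2
  have hkey : ∀ i, ℓ i ≠ 1 → ∫ ω, max ((∑ j, X (i, j) ω / Θ) - a) 0 ∂μ ≤ ((ℓ i : ℝ)⁻¹) ^ 3 := by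
    intro i hi
    have hmem := hℓ i
    rw [Finset.mem_Icc] at hmem
    have h2 : 2 ≤ ℓ i := by omega
    have hl2 : (2:ℝ) ≤ (ℓ i : ℝ) := by exact_mod_cast h2
    have hsub : iIndepFun (fun j : Fin n => X (i, j)) μ :=
      iIndepFun_precomp hindep (fun j => (i, j)) (fun x y h => by simpa using h)
    have hZindep : iIndepFun (fun j ω => X (i, j) ω / Θ) μ :=
      hsub.comp (fun _ => (· / Θ)) (fun _ => measurable_id.div_const Θ)
    refine key_i μ _ (fun j => (hXmeas (i, j)).div_const Θ) hZindep hl2 (fun j => hexp i j) ?_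
    have h1l : (1:ℝ) < (ℓ i : ℝ) := by linarith
    have := heff i
    simpa [effSize, h1l] using this
  have hTint : ∀ i, Integrable (T i) μ := by
    intro i
    by_cases h : ℓ i = 1 <;> simp only [hT, h, if_true, if_false, reduceIte]
    · exact integrable_finset_sum _ (fun j _ => hXint (i, j))
    · exact (((integrable_finset_sum _ fun j _ => (hXint (i, j)).div_const Θ).sub
        (integrable_const a)).pos_part).const_mul Θ
  have hTnn : ∀ i ω, 0 ≤ T i ω := by
    intro i ω
    by_cases h : ℓ i = 1 <;> simp only [hT, h, if_true, if_false, reduceIte]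
    · exact Finset.sum_nonneg fun j _ => hXnn _ _
    · exact mul_nonneg hΘ.le (le_max_right _ _)
  have hGint : Integrable (fun ω => Θ * a + ∑ i, T i ω) μ :=
    (integrable_const _).add (integrable_finset_sum _ fun i _ => hTint i)
  have hΘa : 0 ≤ Θ * a := by rw [ha]; positivity
  have hptwise : ∀ ω, (⨆ i, ∑ j, X (i, j) ω) ≤ Θ * a + ∑ i, T i ω := by
    intro ω
    apply ciSup_le
    intro i0
    have h1 : ∑ j, X (i0, j) ω ≤ Θ * a + T i0 ω := by
      by_cases h : ℓ i0 = 1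
      · simp only [hT, h, if_true, reduceIte]
        linarith
      · simp only [hT, h, if_false, reduceIte]
        have h2 : (∑ j, X (i0, j) ω / Θ) - a ≤ max ((∑ j, X (i0, j) ω / Θ) - a) 0 :=
          le_max_left _ _
        have h3 : Θ * ((∑ j, X (i0, j) ω / Θ) - a)
            ≤ Θ * max ((∑ j, X (i0, j) ω / Θ) - a) 0 :=
          mul_le_mul_of_nonneg_left h2 hΘ.le
        have h4 : Θ * (∑ j, X (i0, j) ω / Θ) = ∑ j, X (i0, j) ω := by
          rw [Finset.mul_sum]
          refine Finset.sum_congr rfl fun j _ => ?_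
          field_simp
        nlinarith [h3]
    have h5 : T i0 ω ≤ ∑ i, T i ω :=
      Finset.single_le_sum (f := fun i => T i ω) (fun i _ => hTnn i ω) (Finset.mem_univ i0)
    linarith
  have hmain : ∫ ω, (⨆ i, ∑ j, X (i, j) ω) ∂μ ≤ ∫ ω, (Θ * a + ∑ i, T i ω) ∂μ := by
    apply integral_mono_of_nonneg
    · filter_upwards with ω
      obtain ⟨i0⟩ := ‹Nonempty (Fin m)›
      exact le_ciSup_of_le ((Set.finite_range _).bddAbove) i0
        (Finset.sum_nonneg fun j _ => hXnn _ _)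
    · exact hGint
    · filter_upwards with ω using hptwise ω
  rw [integral_add (integrable_const _) (integrable_finset_sum _ fun i _ => hTint i),
    integral_const, integral_finset_sum _ fun i _ => hTint i] at hmain
  simp only [measure_univ, probReal_univ, smul_eq_mul, one_mul] at hmain
  -- split the sum
  have hsplit : ∑ i, ∫ ω, T i ω ∂μ
      = ∑ i ∈ Finset.univ.filter (fun i => ℓ i = 1), ∫ ω, T i ω ∂μ
        + ∑ i ∈ Finset.univ.filter (fun i => ¬ ℓ i = 1), ∫ ω, T i ω ∂μ :=
    (Finset.sum_filter_add_sum_filter_not _ _ _).symm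
  have hfirst : ∑ i ∈ Finset.univ.filter (fun i => ℓ i = 1), ∫ ω, T i ω ∂μ ≤ γ * Θ := by
    have hone : ∀ i ∈ Finset.univ.filter (fun i => ℓ i = 1), ∫ ω, T i ω ∂μ ≤ γ * Θ := by
      intro i hi
      rw [Finset.mem_filter] at hi
      have hi1 := hi.2
      simp only [hT, hi1, if_true, reduceIte]
      rw [integral_finset_sum _ fun j _ => hXint (i, j)]
      have heffi := heff i
      simp only [effSize, hi1, Nat.cast_one, lt_self_iff_false, if_false, reduceIte] at heffi
      have hdiv : ∀ j : Fin n, ∫ ω, X (i, j) ω / Θ ∂μ = (∫ ω, X (i, j) ω ∂μ) / Θ := by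
        intro j; exact integral_div Θ _
      rw [Finset.sum_congr rfl (fun j _ => hdiv j), ← Finset.sum_div] at heffi
      rw [div_le_iff₀ hΘ] at heffi
      linarith
    calc ∑ i ∈ Finset.univ.filter (fun i => ℓ i = 1), ∫ ω, T i ω ∂μ
        ≤ (Finset.univ.filter (fun i => ℓ i = 1)).card • (γ * Θ) :=
          Finset.sum_le_card_nsmul _ _ _ hone
      _ ≤ γ * Θ := by
          have hc : (Finset.univ.filter (fun i => ℓ i = 1)).card ≤ 1 := by
            have := hcard 1 (Finset.mem_Icc.mpr ⟨le_refl 1, hm1⟩)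
            simpa using this
          have hγΘ : 0 ≤ γ * Θ := by positivity
          rw [nsmul_eq_mul]
          have : ((Finset.univ.filter (fun i => ℓ i = 1)).card : ℝ) ≤ 1 := by
            exact_mod_cast hc
          nlinarith
  have hsecond : ∑ i ∈ Finset.univ.filter (fun i => ¬ ℓ i = 1), ∫ ω, T i ω ∂μ ≤ Θ := by
    have hterm : ∀ i ∈ Finset.univ.filter (fun i => ¬ ℓ i = 1),
        ∫ ω, T i ω ∂μ ≤ Θ * ((ℓ i : ℝ)⁻¹) ^ 3 := by
      intro i hi
      rw [Finset.mem_filter] at hi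
      simp only [hT, hi.2, if_false, reduceIte]
      rw [integral_const_mul]
      exact mul_le_mul_of_nonneg_left (hkey i hi.2) hΘ.le
    have hgroup : ∑ i ∈ Finset.univ.filter (fun i => ¬ ℓ i = 1), ((ℓ i : ℝ)⁻¹) ^ 3 ≤ 1 := by
      set s := Finset.univ.filter (fun i : Fin m => ¬ ℓ i = 1) with hs
      rw [Finset.sum_comp (fun l : ℕ => ((l : ℝ)⁻¹) ^ 3) ℓ]
      have himg : s.image ℓ ⊆ Finset.Icc 2 m := by
        intro b hb
        rw [Finset.mem_image] at hb
        obtain ⟨i, hi, rfl⟩ := hb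
        rw [hs, Finset.mem_filter] at hi
        have := hℓ i
        rw [Finset.mem_Icc] at this ⊢
        omega
      calc ∑ b ∈ s.image ℓ, (s.filter fun i => ℓ i = b).card • ((b : ℝ)⁻¹) ^ 3
          ≤ ∑ b ∈ s.image ℓ, ((b : ℝ)⁻¹) ^ 2 := by
            refine Finset.sum_le_sum fun b hb => ?_
            have hb2 : 2 ≤ b := (Finset.mem_Icc.mp (himg hb)).1
            have hbm : b ≤ m := (Finset.mem_Icc.mp (himg hb)).2
            have hcb : (s.filter fun i => ℓ i = b).card ≤ b := by
              refine le_trans ?_ (hcard b (Finset.mem_Icc.mpr ⟨by omega, hbm⟩))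
              apply Finset.card_le_card
              intro i hi
              rw [Finset.mem_filter] at hi ⊢
              exact ⟨Finset.mem_univ i, hi.2⟩
            rw [nsmul_eq_mul]
            have hb0 : (0:ℝ) < b := by positivity
            have hcb' : ((s.filter fun i => ℓ i = b).card : ℝ) ≤ b := by exact_mod_cast hcb
            calc ((s.filter fun i => ℓ i = b).card : ℝ) * ((b : ℝ)⁻¹) ^ 3
                ≤ (b : ℝ) * ((b : ℝ)⁻¹) ^ 3 :=
                  mul_le_mul_of_nonneg_right hcb' (by positivity)
              _ = ((b : ℝ)⁻¹) ^ 2 := by field_simp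
        _ ≤ ∑ b ∈ Finset.Icc 2 m, ((b : ℝ)⁻¹) ^ 2 := by
            refine Finset.sum_le_sum_of_subset_of_nonneg himg fun b _ _ => by positivity
        _ ≤ 1 := aux_sumsq m
    calc ∑ i ∈ Finset.univ.filter (fun i => ¬ ℓ i = 1), ∫ ω, T i ω ∂μ
        ≤ ∑ i ∈ Finset.univ.filter (fun i => ¬ ℓ i = 1), Θ * ((ℓ i : ℝ)⁻¹) ^ 3 :=
          Finset.sum_le_sum hterm
      _ = Θ * ∑ i ∈ Finset.univ.filter (fun i => ¬ ℓ i = 1), ((ℓ i : ℝ)⁻¹) ^ 3 :=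
          (Finset.mul_sum _ _ _).symm
      _ ≤ Θ * 1 := mul_le_mul_of_nonneg_left hgroup hΘ.le
      _ = Θ := mul_one Θ
  rw [hsplit] at hmain
  have : Θ * a + (γ * Θ + Θ) = (2 * γ + 4) * Θ := by rw [ha]; ring
  linarith
end
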